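/- arXiv:0712.0622 — 7 statements merged into one kernel-verified Lean document; each statement's English description precedes it below -/
import Mathlib

section
/- Let (Ω,F,(F_t)_{t≥0},P) be a filtered probability space, Z an F-measurable real random variable, and for each t ≥ 0 let Q_t(ω,dx) be a regular conditional distribution of Z given F_t. If for each t ≥ 0 there exists a positive σ-finite measure η_t on (ℝ,B(ℝ)) with Q_t(ω,·) ≪ η_t for P-almost every ω, then for each t ≥ 0 one also has Q_t(ω,·) ≪ η for P-almost every ω, where η is the law (distribution) of Z. In other words, in Jacod's criterion the dominating measure can always be taken to be the distribution of Z, independently of t. -/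
open MeasureTheory Filter Set ProbabilityTheory
open scoped NNReal ENNReal

noncomputable section

namespace Enlargement

variable {Ω : Type*} {m : MeasurableSpace Ω}

/-- A path `f : ℝ≥0 → ℝ` is càdlàg: right-continuous with left limits. -/
def IsCadlag (f : ℝ≥0 → ℝ) : Prop :=
  (∀ t : ℝ≥0, Tendsto f (nhdsWithin t (Set.Ici t)) (nhds (f t))) ∧
  (∀ t : ℝ≥0, 0 < t → ∃ l : ℝ, Tendsto f (nhdsWithin t (Set.Iio t)) (nhds l))

/-- `M` is a local martingale w.r.t. the filtration `𝓕` under `μ`: it is adapted and there is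
an increasing sequence of stopping times `τ n → ∞` a.s. localizing `M` to martingales. -/
def IsLocalMartingale (𝓕 : Filtration ℝ≥0 m) (μ : Measure Ω) (M : ℝ≥0 → Ω → ℝ) : Prop :=
  Adapted 𝓕 M ∧
  ∃ τ : ℕ → Ω → ℝ≥0,
    (∀ n, IsStoppingTime 𝓕 (fun ω => ((τ n ω : ℝ≥0) : WithTop ℝ≥0))) ∧
    (∀ n ω, τ n ω ≤ τ (n + 1) ω) ∧
    (∀ᵐ ω ∂μ, Tendsto (fun n => τ n ω) atTop atTop) ∧
    (∀ n, Martingale (fun t ω => M (min t (τ n ω)) ω) 𝓕 μ)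

/-- `X` is a semimartingale w.r.t. `𝓕` under `μ`: adapted, a.s. càdlàg, and
`X = X₀ + M + A` with `M` a càdlàg local martingale started at `0` and `A` a càdlàg
adapted process of finite variation on compact intervals started at `0`. -/
def IsSemimartingale (𝓕 : Filtration ℝ≥0 m) (μ : Measure Ω) (X : ℝ≥0 → Ω → ℝ) : Prop :=
  Adapted 𝓕 X ∧ (∀ᵐ ω ∂μ, IsCadlag fun t => X t ω) ∧
  ∃ M A : ℝ≥0 → Ω → ℝ,
    IsLocalMartingale 𝓕 μ M ∧ (∀ ω, M 0 ω = 0) ∧ (∀ᵐ ω ∂μ, IsCadlag fun t => M t ω) ∧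
    Adapted 𝓕 A ∧ (∀ ω, A 0 ω = 0) ∧ (∀ᵐ ω ∂μ, IsCadlag fun t => A t ω) ∧
    (∀ᵐ ω ∂μ, ∀ t : ℝ≥0, BoundedVariationOn (fun s => A s ω) (Set.Icc 0 t)) ∧
    (∀ t ω, X t ω = X 0 ω + M t ω + A t ω)

/-- The filtration `𝓕` satisfies the usual hypotheses under `μ`: it is complete
(`𝓕 0` contains all `μ`-null sets) and right-continuous. -/
def UsualConditions (𝓕 : Filtration ℝ≥0 m) (μ : Measure Ω) : Prop :=
  (∀ s : Set Ω, μ s = 0 → MeasurableSet[𝓕 0] s) ∧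
  (∀ t : ℝ≥0, (𝓕 t : MeasurableSpace Ω) = ⨅ (u : ℝ≥0) (_ : t < u), (𝓕 u : MeasurableSpace Ω))

/-- `𝓖` is the initial enlargement of `𝓕` by the random variable `Z`:
`𝓖 t = ⋂_{ε>0} (𝓕 (t+ε) ⊔ σ(Z))`. -/
def InitEnlargement (𝓕 : Filtration ℝ≥0 m) (Z : Ω → ℝ) (𝓖 : Filtration ℝ≥0 m) : Prop :=
  ∀ t : ℝ≥0, (𝓖 t : MeasurableSpace Ω) =
    ⨅ (ε : ℝ≥0) (_ : 0 < ε),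
      ((𝓕 (t + ε) : MeasurableSpace Ω) ⊔ MeasurableSpace.comap Z inferInstance)

/-- `𝓖` is the progressive enlargement of `𝓕` by the random time `ρ`:
`𝓖 t = ⋂_{ε>0} (𝓕 (t+ε) ⊔ σ(ρ ∧ (t+ε)))`; it is the smallest filtration satisfying the
usual hypotheses containing `𝓕` and making `ρ` a stopping time. -/
def ProgEnlargement (𝓕 : Filtration ℝ≥0 m) (ρ : Ω → ℝ≥0∞) (𝓖 : Filtration ℝ≥0 m) : Prop :=
  ∀ t : ℝ≥0, (𝓖 t : MeasurableSpace Ω) =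
    ⨅ (ε : ℝ≥0) (_ : 0 < ε),
      ((𝓕 (t + ε) : MeasurableSpace Ω) ⊔
        MeasurableSpace.comap (fun ω => min (ρ ω) ((t + ε : ℝ≥0) : ℝ≥0∞)) inferInstance)

/-- `Q` is a regular conditional distribution of `Z` given `𝓕 t` for each `t`: a Markov
kernel, `𝓕 t`-measurable in `ω`, such that `Q t · B` is a version of `P(Z ∈ B | 𝓕 t)`. -/
def IsRegCondDist (𝓕 : Filtration ℝ≥0 m) (μ : Measure Ω) (Z : Ω → ℝ)
    (Q : ℝ≥0 → Ω → Measure ℝ) : Prop :=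
  ∀ t : ℝ≥0,
    (∀ ω, IsProbabilityMeasure (Q t ω)) ∧
    (∀ B : Set ℝ, MeasurableSet B → Measurable[𝓕 t] fun ω => (Q t ω B).toReal) ∧
    (∀ B : Set ℝ, MeasurableSet B →
      (fun ω => (Q t ω B).toReal) =ᵐ[μ] μ[(Z ⁻¹' B).indicator (fun _ => (1 : ℝ)) | 𝓕 t])

/-- In Jacod's criterion, the dominating measure can be taken to be the law of `Z`: if for
each `t` there is a σ-finite measure `η t` with `Q t ω ≪ η t` for a.e. `ω`, then for each
`t` one also has `Q t ω ≪ law(Z)` for a.e. `ω`, where `law(Z) = Measure.map Z μ`. -/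
theorem jacod_dominating_measure_law {μ : Measure Ω} [IsProbabilityMeasure μ]
    (𝓕 : Filtration ℝ≥0 m)
    (Z : Ω → ℝ) (hZ : Measurable Z)
    (Q : ℝ≥0 → Ω → Measure ℝ) (hQ : IsRegCondDist 𝓕 μ Z Q)
    (hdom : ∀ t : ℝ≥0, ∃ η : Measure ℝ, SigmaFinite η ∧ ∀ᵐ ω ∂μ, Q t ω ≪ η) :
    ∀ t : ℝ≥0, ∀ᵐ ω ∂μ, Q t ω ≪ Measure.map Z μ := by
  intro t
  obtain ⟨η, hη, hQη⟩ := hdom t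
  obtain ⟨hprob, _hmeas, hver⟩ := hQ t
  set ν : Measure ℝ := Measure.map Z μ with hν
  have hνprob : IsProbabilityMeasure ν := Measure.isProbabilityMeasure_map hZ.aemeasurable
  -- Lebesgue decomposition of η w.r.t. ν
  have hsing : η.singularPart ν ⟂ₘ ν := Measure.mutuallySingular_singularPart η ν
  obtain ⟨s, hs_meas, hs1, hs2⟩ := hsing
  -- ν sᶜ = 0, and singularPart vanishes on s.
  -- Step 1: Q t ω sᶜ = 0 for a.e. ω.
  have hνsc : ν sᶜ = 0 := hs2
  have hZsc : μ (Z ⁻¹' sᶜ) = 0 := by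
    rw [hν, Measure.map_apply hZ hs_meas.compl] at hνsc
    exact hνsc
  have hint : Integrable ((Z ⁻¹' sᶜ).indicator (fun _ => (1 : ℝ))) μ :=
    (integrable_const (1 : ℝ)).indicator (hZ hs_meas.compl)
  have hintzero : ∫ ω, (Z ⁻¹' sᶜ).indicator (fun _ => (1 : ℝ)) ω ∂μ = 0 := by
    rw [integral_indicator (hZ hs_meas.compl)]
    simp only [Set.preimage_compl] at hZsc ⊢
    simp [Measure.restrict_eq_zero.mpr hZsc]
  have hce := hver sᶜ hs_meas.compl
  have hfun_int : Integrable (fun ω => (Q t ω sᶜ).toReal) μ :=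
    (integrable_condExp (m := 𝓕 t)).congr hce.symm
  have hfun_zero : ∫ ω, (Q t ω sᶜ).toReal ∂μ = 0 := by
    rw [integral_congr_ae hce, integral_condExp (𝓕.le t)]
    exact hintzero
  have hae0 : ∀ᵐ ω ∂μ, (Q t ω sᶜ).toReal = 0 := by
    have := (integral_eq_zero_iff_of_nonneg
      (fun ω => ENNReal.toReal_nonneg) hfun_int).mp hfun_zero
    filter_upwards [this] with ω hω using hω
  have haeQ0 : ∀ᵐ ω ∂μ, Q t ω sᶜ = 0 := by
    filter_upwards [hae0] with ω hω
    have : IsProbabilityMeasure (Q t ω) := hprob ω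
    rcases ENNReal.toReal_eq_zero_iff _ |>.mp hω with h | h
    · exact h
    · exact absurd h (measure_ne_top _ _)
  -- Step 2: combine
  filter_upwards [hQη, haeQ0] with ω hωη hωs
  refine Measure.AbsolutelyContinuous.mk fun B hB hνB => ?_
  have hBs : Q t ω (B ∩ s) = 0 := by
    -- η (B ∩ s) = 0
    have hdecomp : η = η.singularPart ν + ν.withDensity (η.rnDeriv ν) :=
      (η.haveLebesgueDecomposition_add ν)
    have h1 : η.singularPart ν (B ∩ s) = 0 :=
      measure_mono_null Set.inter_subset_right hs1
    have h2 : ν.withDensity (η.rnDeriv ν) (B ∩ s) = 0 :=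
      (withDensity_absolutelyContinuous ν _) (measure_mono_null Set.inter_subset_left hνB)
    have hηBs : η (B ∩ s) = 0 := by
      rw [hdecomp]; simp [Measure.add_apply, h1, h2]
    exact hωη hηBs
  have hBsc : Q t ω (B ∩ sᶜ) = 0 :=
    measure_mono_null Set.inter_subset_right hωs
  have : Q t ω B ≤ Q t ω (B ∩ s) + Q t ω (B ∩ sᶜ) := by
    nth_rewrite 1 [← Set.inter_union_compl B s]
    exact measure_union_le _ _
  simpa [hBs, hBsc] using le_antisymm (by simpa [hBs, hBsc] using this) zero_le

end Enlargement
end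
end

section
/- Brémaud–Yor characterization of the (H) hypothesis: Let (Ω,F,P) be a probability space with two filtrations (F_t)_{t≥0} and (G_t)_{t≥0} satisfying the usual assumptions and F_t ⊆ G_t for all t. The following are equivalent: (1) every (F_t)-martingale is a (G_t)-martingale; (2) for every t ≥ 0, the σ-algebras G_t and F_∞ = σ(∪_s F_s) are conditionally independent given F_t. -/
open MeasureTheory Filter Set ProbabilityTheory
open scoped NNReal ENNReal Topology

noncomputable section

namespace Enlargement

variable {Ω : Type*} {m : MeasurableSpace Ω}

/-- The σ-algebras `mA` and `mB` are conditionally independent given `mC` (under `μ`):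
for all bounded `mA`-measurable `X` and bounded `mB`-measurable `Y`,
`E[XY | mC] = E[X | mC] · E[Y | mC]` a.s. -/
def CondIndepSigma (mA mB mC : MeasurableSpace Ω) (μ : @Measure Ω m) : Prop :=
  ∀ X Y : Ω → ℝ, StronglyMeasurable[mA] X → StronglyMeasurable[mB] Y →
    (∃ C : ℝ, ∀ ω, |X ω| ≤ C) → (∃ C : ℝ, ∀ ω, |Y ω| ≤ C) →
    μ[fun ω => X ω * Y ω | mC] =ᵐ[μ] fun ω => (μ[X | mC]) ω * (μ[Y | mC]) ω

section Aux

variable {μ : Measure Ω} [IsProbabilityMeasure μ]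

lemma integrable_of_bdd {X : Ω → ℝ} (hX : AEStronglyMeasurable X μ)
    {C : ℝ} (hC : ∀ ω, |X ω| ≤ C) : Integrable X μ :=
  ⟨hX, HasFiniteIntegral.of_bounded (C := C) (ae_of_all _ fun ω => by
    simpa [Real.norm_eq_abs] using hC ω)⟩

lemma setIntegral_condexp_eq_of_condIndep_bdd
    (𝓕 𝓖 : Filtration ℝ≥0 m) (hle : ∀ t : ℝ≥0, (𝓕 t : MeasurableSpace Ω) ≤ 𝓖 t) (s : ℝ≥0)
    (hci : CondIndepSigma (𝓖 s) (⨆ u : ℝ≥0, (𝓕 u : MeasurableSpace Ω)) (𝓕 s) μ)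
    {f : Ω → ℝ} {C : ℝ} (hC : ∀ ω, |f ω| ≤ C)
    (hfm : StronglyMeasurable[⨆ u : ℝ≥0, (𝓕 u : MeasurableSpace Ω)] f)
    {A : Set Ω} (hA : MeasurableSet[𝓖 s] A) :
    ∫ x in A, (μ[f | (𝓕 s : MeasurableSpace Ω)]) x ∂μ = ∫ x in A, f x ∂μ := by
  have hmtop : (⨆ u : ℝ≥0, (𝓕 u : MeasurableSpace Ω)) ≤ m := iSup_le fun u => 𝓕.le u
  set X : Ω → ℝ := A.indicator fun _ => (1 : ℝ) with hXdef
  have hXm : StronglyMeasurable[𝓖 s] X := stronglyMeasurable_const.indicator hA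
  have hXb : ∀ ω, |X ω| ≤ 1 := fun ω => by
    by_cases h : ω ∈ A <;> simp [X, Set.indicator_of_mem, Set.indicator_of_notMem, h]
  have hfmm : AEStronglyMeasurable f μ := (hfm.mono hmtop).aestronglyMeasurable
  have hXY : (fun ω => X ω * f ω) = A.indicator f := by
    funext ω; by_cases h : ω ∈ A <;> simp [X, h]
  have hfint : Integrable f μ := integrable_of_bdd hfmm hC
  have hXint : Integrable X μ :=
    integrable_of_bdd (hXm.mono (𝓖.le s)).aestronglyMeasurable hXb
  have hXfint : Integrable (fun ω => X ω * f ω) μ := by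
    rw [hXY]; exact hfint.indicator (𝓖.le s _ hA)
  have hcond_int : Integrable (fun ω => X ω * (μ[f|(𝓕 s : MeasurableSpace Ω)]) ω) μ :=
    Integrable.bdd_mul integrable_condExp (hXm.mono (𝓖.le s)).aestronglyMeasurable
      (c := 1) (ae_of_all _ fun ω => by simpa [Real.norm_eq_abs] using hXb ω)
  have hpull : μ[(μ[f|(𝓕 s : MeasurableSpace Ω)]) * X | (𝓕 s : MeasurableSpace Ω)]
      =ᵐ[μ] (μ[f|(𝓕 s : MeasurableSpace Ω)]) * μ[X|(𝓕 s : MeasurableSpace Ω)] :=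
    condExp_mul_of_stronglyMeasurable_left stronglyMeasurable_condExp
      (by rw [mul_comm]; exact hcond_int) hXint
  have h := hci X f hXm hfm ⟨1, hXb⟩ ⟨C, hC⟩
  have h2 : ∫ ω, ((μ[X|(𝓕 s : MeasurableSpace Ω)]) ω * (μ[f|(𝓕 s : MeasurableSpace Ω)]) ω) ∂μ
      = ∫ x in A, (μ[f|(𝓕 s : MeasurableSpace Ω)]) x ∂μ := by
    have e1 : ∫ ω, ((μ[X|(𝓕 s : MeasurableSpace Ω)]) ω * (μ[f|(𝓕 s : MeasurableSpace Ω)]) ω) ∂μ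
        = ∫ ω, ((μ[f|(𝓕 s : MeasurableSpace Ω)]) * μ[X|(𝓕 s : MeasurableSpace Ω)]) ω ∂μ := by
      refine integral_congr_ae (ae_of_all _ fun ω => ?_)
      simp [Pi.mul_apply, mul_comm]
    have e2 : ((μ[f|(𝓕 s : MeasurableSpace Ω)]) * X)
        = A.indicator (μ[f|(𝓕 s : MeasurableSpace Ω)]) := by
      funext ω; by_cases hω : ω ∈ A <;> simp [X, hω]
    rw [e1, ← integral_congr_ae hpull,
      integral_condExp (𝓕.le s), e2, integral_indicator (𝓖.le s _ hA)]
  calc ∫ x in A, (μ[f|(𝓕 s : MeasurableSpace Ω)]) x ∂μ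
      = ∫ ω, ((μ[X|(𝓕 s : MeasurableSpace Ω)]) ω * (μ[f|(𝓕 s : MeasurableSpace Ω)]) ω) ∂μ :=
        h2.symm
    _ = ∫ ω, (μ[fun ω => X ω * f ω|(𝓕 s : MeasurableSpace Ω)]) ω ∂μ :=
        (integral_congr_ae h).symm
    _ = ∫ ω, X ω * f ω ∂μ := integral_condExp (𝓕.le s)
    _ = ∫ x in A, f x ∂μ := by rw [hXY, integral_indicator (𝓖.le s _ hA)]

lemma condexp_enlarged_eq
    (𝓕 𝓖 : Filtration ℝ≥0 m) (hle : ∀ t : ℝ≥0, (𝓕 t : MeasurableSpace Ω) ≤ 𝓖 t) (s : ℝ≥0)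
    (hci : CondIndepSigma (𝓖 s) (⨆ u : ℝ≥0, (𝓕 u : MeasurableSpace Ω)) (𝓕 s) μ)
    {f : Ω → ℝ} (hfint : Integrable f μ)
    (hfm : StronglyMeasurable[⨆ u : ℝ≥0, (𝓕 u : MeasurableSpace Ω)] f) :
    μ[f | (𝓖 s : MeasurableSpace Ω)] =ᵐ[μ] μ[f | (𝓕 s : MeasurableSpace Ω)] := by
  have hmtop : (⨆ u : ℝ≥0, (𝓕 u : MeasurableSpace Ω)) ≤ m := iSup_le fun u => 𝓕.le u
  refine (ae_eq_condExp_of_forall_setIntegral_eq (𝓖.le s) hfint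
    (fun A hA _ => integrable_condExp.integrableOn)
    (fun A hA _ => ?_)
    ((stronglyMeasurable_condExp.mono (hle s)).aestronglyMeasurable)).symm
  -- goal: ∫ x in A, μ[f|𝓕 s] x ∂μ = ∫ x in A, f x ∂μ
  set g : ℕ → Ω → ℝ := fun n ω => max (min (f ω) (n : ℝ)) (-(n : ℝ)) with hgdef
  have hgm : ∀ n, StronglyMeasurable[⨆ u : ℝ≥0, (𝓕 u : MeasurableSpace Ω)] (g n) :=
    fun n => by
      letI : MeasurableSpace Ω := ⨆ u : ℝ≥0, (𝓕 u : MeasurableSpace Ω)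
      exact (hfm.inf stronglyMeasurable_const).sup stronglyMeasurable_const
  have hgb : ∀ n ω, |g n ω| ≤ (n : ℝ) := by
    intro n ω
    rw [abs_le]
    exact ⟨le_max_right _ _,
      max_le (min_le_right _ _) (neg_le_self (Nat.cast_nonneg n))⟩
  have hgf : ∀ n ω, |g n ω| ≤ |f ω| := by
    intro n ω
    rw [abs_le]
    constructor
    · exact le_trans (le_min (neg_abs_le _)
        (le_trans (neg_nonpos_of_nonneg (abs_nonneg _)) (Nat.cast_nonneg n))) (le_max_left _ _)
    · exact max_le (le_trans (min_le_left _ _) (le_abs_self _))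
        (le_trans (neg_nonpos_of_nonneg (Nat.cast_nonneg n)) (abs_nonneg _))
  have htends : ∀ ω, Tendsto (fun n => g n ω) atTop (𝓝 (f ω)) := by
    intro ω
    refine tendsto_const_nhds.congr' ?_
    filter_upwards [eventually_ge_atTop ⌈|f ω|⌉₊] with n hn
    have h1 : |f ω| ≤ (n : ℝ) := le_trans (Nat.le_ceil _) (Nat.cast_le.2 hn)
    have h2 : f ω ≤ (n : ℝ) := le_trans (le_abs_self _) h1
    have h3 : -(n : ℝ) ≤ f ω := by
      have := neg_abs_le (f ω); linarith
    simp only [hgdef, min_eq_left h2, max_eq_left h3]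
  have hgint : ∀ n, Integrable (g n) μ :=
    fun n => integrable_of_bdd ((hgm n).mono hmtop).aestronglyMeasurable (hgb n)
  have hAeq : ∀ n, ∫ x in A, (μ[g n|(𝓕 s : MeasurableSpace Ω)]) x ∂μ = ∫ x in A, g n x ∂μ :=
    fun n => setIntegral_condexp_eq_of_condIndep_bdd 𝓕 𝓖 hle s hci (hgb n) (hgm n) hA
  have hL1 : Tendsto (fun n => ∫ ω, |g n ω - f ω| ∂μ) atTop (𝓝 0) := by
    have := tendsto_integral_of_dominated_convergence (μ := μ)
      (F := fun n ω => |g n ω - f ω|) (f := fun _ => (0 : ℝ)) (bound := fun ω => 2 * |f ω|)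
      (fun n => ((hgint n).sub hfint).abs.1)
      (hfint.abs.const_mul 2)
      (fun n => ae_of_all _ fun ω => by
        rw [Real.norm_eq_abs, abs_abs]
        have h1 := hgf n ω
        have h2 := abs_sub (g n ω) (f ω)
        show |g n ω - f ω| ≤ 2 * |f ω|
        linarith)
      (ae_of_all _ fun ω => by
        have h := ((htends ω).sub (tendsto_const_nhds (x := f ω))).abs
        simpa using h)
    simpa using this
  have h1 : Tendsto (fun n => ∫ x in A, g n x ∂μ) atTop (𝓝 (∫ x in A, f x ∂μ)) := by
    refine tendsto_integral_of_dominated_convergence (fun ω => |f ω|)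
      (fun n => (hgint n).1.restrict)
      hfint.abs.integrableOn
      (fun n => ae_of_all _ fun ω => by rw [Real.norm_eq_abs]; exact hgf n ω)
      (ae_of_all _ fun ω => htends ω)
  have h2 : Tendsto (fun n => ∫ x in A, (μ[g n|(𝓕 s : MeasurableSpace Ω)]) x ∂μ) atTop
      (𝓝 (∫ x in A, (μ[f|(𝓕 s : MeasurableSpace Ω)]) x ∂μ)) := by
    rw [← tendsto_sub_nhds_zero_iff]
    have key : ∀ n, |∫ x in A, (μ[g n|(𝓕 s : MeasurableSpace Ω)]) x ∂μ
        - ∫ x in A, (μ[f|(𝓕 s : MeasurableSpace Ω)]) x ∂μ| ≤ ∫ ω, |g n ω - f ω| ∂μ := by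
      intro n
      have hsub : ∫ x in A, (μ[g n|(𝓕 s : MeasurableSpace Ω)]) x ∂μ
          - ∫ x in A, (μ[f|(𝓕 s : MeasurableSpace Ω)]) x ∂μ
          = ∫ x in A, ((μ[g n|(𝓕 s : MeasurableSpace Ω)]) x
              - (μ[f|(𝓕 s : MeasurableSpace Ω)]) x) ∂μ :=
        (integral_sub integrable_condExp.integrableOn integrable_condExp.integrableOn).symm
      have hae : (fun x => (μ[g n|(𝓕 s : MeasurableSpace Ω)]) x
          - (μ[f|(𝓕 s : MeasurableSpace Ω)]) x)
          =ᵐ[μ] μ[g n - f|(𝓕 s : MeasurableSpace Ω)] :=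
        (condExp_sub (hgint n) hfint _).symm
      rw [hsub, integral_congr_ae (ae_restrict_of_ae hae)]
      calc |∫ x in A, (μ[g n - f|(𝓕 s : MeasurableSpace Ω)]) x ∂μ|
          ≤ ∫ x in A, |(μ[g n - f|(𝓕 s : MeasurableSpace Ω)]) x| ∂μ := by
            simpa [Real.norm_eq_abs] using
              norm_integral_le_integral_norm (μ := μ.restrict A)
                (f := μ[g n - f|(𝓕 s : MeasurableSpace Ω)])
        _ ≤ ∫ ω, |(μ[g n - f|(𝓕 s : MeasurableSpace Ω)]) ω| ∂μ :=
            setIntegral_le_integral integrable_condExp.abs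
              (ae_of_all _ fun ω => abs_nonneg _)
        _ ≤ ∫ ω, |(g n - f) ω| ∂μ := integral_abs_condExp_le _
        _ = ∫ ω, |g n ω - f ω| ∂μ := rfl
    exact squeeze_zero_norm (fun n => by
      simpa [Real.norm_eq_abs] using key n) hL1
  exact tendsto_nhds_unique (h2.congr hAeq) h1

/-- The `ℕ`-indexed filtration obtained by restricting `𝓕` to integer times. -/
def natFiltration (𝓕 : Filtration ℝ≥0 m) : Filtration ℕ m where
  seq n := 𝓕 (n : ℝ≥0)
  mono' i j hij := 𝓕.mono (by exact_mod_cast hij)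
  le' n := 𝓕.le _

lemma natFiltration_apply (𝓕 : Filtration ℝ≥0 m) (n : ℕ) :
    (natFiltration 𝓕 n : MeasurableSpace Ω) = 𝓕 (n : ℝ≥0) := rfl

end Aux

/-- **Brémaud–Yor characterization of the (H) hypothesis.** Every `𝓕`-martingale is a
`𝓖`-martingale iff for every `t`, the σ-algebras `𝓖 t` and `𝓕_∞` are conditionally
independent given `𝓕 t`. -/
theorem bremaud_yor {μ : Measure Ω} [IsProbabilityMeasure μ]
    (𝓕 𝓖 : Filtration ℝ≥0 m)
    (h𝓕 : UsualConditions 𝓕 μ) (h𝓖 : UsualConditions 𝓖 μ)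
    (hle : ∀ t : ℝ≥0, (𝓕 t : MeasurableSpace Ω) ≤ 𝓖 t) :
    (∀ M : ℝ≥0 → Ω → ℝ, Martingale M 𝓕 μ → Martingale M 𝓖 μ) ↔
      (∀ t : ℝ≥0,
        CondIndepSigma (𝓖 t) (⨆ s : ℝ≥0, (𝓕 s : MeasurableSpace Ω)) (𝓕 t) μ) := by
  constructor
  · -- (H) hypothesis implies conditional independence
    intro hH t X Y hXm hYm hXb hYb
    obtain ⟨CX, hCX⟩ := hXb
    obtain ⟨CY, hCY⟩ := hYb
    have hmtop : (⨆ u : ℝ≥0, (𝓕 u : MeasurableSpace Ω)) ≤ m := iSup_le fun u => 𝓕.le u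
    have hYint : Integrable Y μ := integrable_of_bdd (hYm.mono hmtop).aestronglyMeasurable hCY
    have hXint : Integrable X μ :=
      integrable_of_bdd (hXm.mono (𝓖.le t)).aestronglyMeasurable hCX
    -- the ℕ-indexed filtration
    have hsup : (⨆ n : ℕ, (natFiltration 𝓕 n : MeasurableSpace Ω))
        = ⨆ u : ℝ≥0, (𝓕 u : MeasurableSpace Ω) := by
      apply le_antisymm
      · refine iSup_le fun n => ?_
        rw [natFiltration_apply]
        exact le_iSup (fun u : ℝ≥0 => (𝓕 u : MeasurableSpace Ω)) (n : ℝ≥0)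
      · refine iSup_le fun u => le_trans (𝓕.mono (Nat.le_ceil u)) ?_
        rw [← natFiltration_apply (Ω := Ω) 𝓕 ⌈u⌉₊]
        exact le_iSup (fun n : ℕ => (natFiltration 𝓕 n : MeasurableSpace Ω)) ⌈u⌉₊
    have hYm' : StronglyMeasurable[⨆ n : ℕ, (natFiltration 𝓕 n : MeasurableSpace Ω)] Y := by
      rw [hsup]; exact hYm
    have hconv := hYint.tendsto_eLpNorm_condExp hYm'
    simp only [natFiltration_apply] at hconv
    have hGmart : Martingale (fun s => μ[Y|(𝓕 s : MeasurableSpace Ω)]) 𝓖 μ :=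
      hH _ (martingale_condExp Y 𝓕 μ)
    have key : μ[Y|(𝓖 t : MeasurableSpace Ω)] =ᵐ[μ] μ[Y|(𝓕 t : MeasurableSpace Ω)] := by
      have hzero : eLpNorm (μ[Y|(𝓕 t : MeasurableSpace Ω)]
          - μ[Y|(𝓖 t : MeasurableSpace Ω)]) 1 μ = 0 := by
        refine le_antisymm (ge_of_tendsto hconv ?_) zero_le
        filter_upwards [eventually_ge_atTop ⌈t⌉₊] with n hn
        have htn : t ≤ (n : ℝ≥0) := le_trans (Nat.le_ceil t) (by exact_mod_cast hn)
        have hmn : μ[(μ[Y|(𝓕 (n : ℝ≥0) : MeasurableSpace Ω)])|(𝓖 t : MeasurableSpace Ω)]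
            =ᵐ[μ] μ[Y|(𝓕 t : MeasurableSpace Ω)] := hGmart.2 t (n : ℝ≥0) htn
        have e1 : μ[Y|(𝓕 t : MeasurableSpace Ω)] - μ[Y|(𝓖 t : MeasurableSpace Ω)]
            =ᵐ[μ] μ[(μ[Y|(𝓕 (n : ℝ≥0) : MeasurableSpace Ω)] - Y)|(𝓖 t : MeasurableSpace Ω)] := by
          have hcs := condExp_sub (μ := μ) (m := 𝓖 t)
            (f := μ[Y|(𝓕 (n : ℝ≥0) : MeasurableSpace Ω)]) (g := Y) integrable_condExp hYint
          filter_upwards [hcs, hmn] with ω hω1 hω2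
          simp only [Pi.sub_apply] at *
          rw [hω1, hω2]
        rw [eLpNorm_congr_ae e1]
        exact eLpNorm_one_condExp_le_eLpNorm _
      have hsm : AEStronglyMeasurable (μ[Y|(𝓕 t : MeasurableSpace Ω)]
          - μ[Y|(𝓖 t : MeasurableSpace Ω)]) μ :=
        (stronglyMeasurable_condExp.mono (𝓕.le t)).aestronglyMeasurable.sub
          (stronglyMeasurable_condExp.mono (𝓖.le t)).aestronglyMeasurable
      have := (eLpNorm_eq_zero_iff hsm one_ne_zero).1 hzero
      filter_upwards [this] with ω hω
      have hω' : (μ[Y|(𝓕 t : MeasurableSpace Ω)]) ω - (μ[Y|(𝓖 t : MeasurableSpace Ω)]) ω = 0 := hω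
      linarith
    have hXYint : Integrable (fun ω => X ω * Y ω) μ := by
      refine integrable_of_bdd (((hXm.mono (𝓖.le t)).mul (hYm.mono hmtop)).aestronglyMeasurable)
        (C := CX * CY) fun ω => ?_
      rw [abs_mul]
      exact mul_le_mul (hCX ω) (hCY ω) (abs_nonneg _) (le_trans (abs_nonneg _) (hCX ω))
    have step2 : μ[X * Y|(𝓖 t : MeasurableSpace Ω)] =ᵐ[μ] X * μ[Y|(𝓖 t : MeasurableSpace Ω)] :=
      condExp_mul_of_stronglyMeasurable_left hXm hXYint hYint
    have step2' : X * μ[Y|(𝓖 t : MeasurableSpace Ω)]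
        =ᵐ[μ] μ[Y|(𝓕 t : MeasurableSpace Ω)] * X := by
      filter_upwards [key] with ω hω
      simp only [Pi.mul_apply, hω, mul_comm]
    have hXmul : Integrable (X * μ[Y|(𝓕 t : MeasurableSpace Ω)]) μ :=
      Integrable.bdd_mul integrable_condExp (hXm.mono (𝓖.le t)).aestronglyMeasurable
        (c := CX) (ae_of_all _ fun ω => by simpa [Real.norm_eq_abs] using hCX ω)
    have step4 : μ[(μ[Y|(𝓕 t : MeasurableSpace Ω)]) * X|(𝓕 t : MeasurableSpace Ω)]
        =ᵐ[μ] μ[Y|(𝓕 t : MeasurableSpace Ω)] * μ[X|(𝓕 t : MeasurableSpace Ω)] :=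
      condExp_mul_of_stronglyMeasurable_left stronglyMeasurable_condExp
        (mul_comm X (μ[Y|(𝓕 t : MeasurableSpace Ω)]) ▸ hXmul) hXint
    calc μ[fun ω => X ω * Y ω|(𝓕 t : MeasurableSpace Ω)]
        =ᵐ[μ] μ[(μ[X * Y|(𝓖 t : MeasurableSpace Ω)])|(𝓕 t : MeasurableSpace Ω)] :=
          (condExp_condExp_of_le (hle t) (𝓖.le t)).symm
      _ =ᵐ[μ] μ[(μ[Y|(𝓕 t : MeasurableSpace Ω)]) * X|(𝓕 t : MeasurableSpace Ω)] :=
          condExp_congr_ae (step2.trans step2')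
      _ =ᵐ[μ] μ[Y|(𝓕 t : MeasurableSpace Ω)] * μ[X|(𝓕 t : MeasurableSpace Ω)] := step4
      _ =ᵐ[μ] fun ω => (μ[X|(𝓕 t : MeasurableSpace Ω)]) ω * (μ[Y|(𝓕 t : MeasurableSpace Ω)]) ω :=
          ae_of_all _ fun ω => by simp [Pi.mul_apply, mul_comm]
  · -- conditional independence implies the (H) hypothesis
    intro hci M hM
    refine ⟨fun i => (hM.stronglyAdapted i).mono (hle i), fun i j hij => ?_⟩
    refine (condexp_enlarged_eq 𝓕 𝓖 hle i (hci i) (hM.integrable j) ?_).trans (hM.2 i j hij)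
    exact (hM.stronglyAdapted j).mono (le_iSup (fun u : ℝ≥0 => (𝓕 u : MeasurableSpace Ω)) j)

end Enlargement
end
end

section
/- Characterization of (H) via projections of bounded functionals: Let (Ω,F,P) be a probability space with filtrations (F_t) ⊆ (G_t) satisfying the usual assumptions. Then every (F_t)-martingale is a (G_t)-martingale if and only if for every t ≥ 0 and every bounded F_∞-measurable random variable F one has E[F | G_t] = E[F | F_t] almost surely. -/
open MeasureTheory Filter Set ProbabilityTheory
open scoped NNReal ENNReal

noncomputable section

namespace Enlargement

variable {Ω : Type*} {m : MeasurableSpace Ω}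

/-- **(H) via projections of bounded `𝓕_∞`-functionals.** Every `𝓕`-martingale is a
`𝓖`-martingale iff for every `t` and every bounded `𝓕_∞`-measurable `F`,
`E[F | 𝓖 t] = E[F | 𝓕 t]` a.s. -/
theorem H_iff_proj_Finfty {μ : Measure Ω} [IsProbabilityMeasure μ]
    (𝓕 𝓖 : Filtration ℝ≥0 m)
    (h𝓕 : UsualConditions 𝓕 μ) (h𝓖 : UsualConditions 𝓖 μ)
    (hle : ∀ t : ℝ≥0, (𝓕 t : MeasurableSpace Ω) ≤ 𝓖 t) :
    (∀ M : ℝ≥0 → Ω → ℝ, Martingale M 𝓕 μ → Martingale M 𝓖 μ) ↔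
      (∀ (t : ℝ≥0) (F : Ω → ℝ),
        StronglyMeasurable[⨆ s : ℝ≥0, (𝓕 s : MeasurableSpace Ω)] F →
        (∃ C : ℝ, ∀ ω, |F ω| ≤ C) →
        μ[F | 𝓖 t] =ᵐ[μ] μ[F | 𝓕 t]) := by
  classical
  have hm'le : (⨆ s : ℝ≥0, (𝓕 s : MeasurableSpace Ω)) ≤ m := iSup_le fun s => 𝓕.le s
  constructor
  · -- (H) ⇒ projection property
    intro H t F hFmeas hFbd
    obtain ⟨C, hC⟩ := hFbd
    have hFsm : AEStronglyMeasurable F μ := (hFmeas.mono hm'le).aestronglyMeasurable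
    have hFint : Integrable F μ :=
      (integrable_const C).mono' hFsm
        (Filter.Eventually.of_forall fun ω => by simpa [Real.norm_eq_abs] using hC ω)
    have hM : Martingale (fun u => μ[F|𝓕 u]) 𝓕 μ := martingale_condExp F 𝓕 μ
    have hMG : Martingale (fun u => μ[F|𝓕 u]) 𝓖 μ := H _ hM
    -- the ℕ-indexed filtration
    set ℱn : Filtration ℕ m :=
      ⟨fun n => 𝓕 (n : ℝ≥0), fun i j hij => 𝓕.mono (by exact_mod_cast hij),
        fun n => 𝓕.le _⟩ with hℱn
    have hsupeq : (⨆ n : ℕ, (ℱn n : MeasurableSpace Ω)) = ⨆ s : ℝ≥0, (𝓕 s : MeasurableSpace Ω) := by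
      refine le_antisymm (iSup_le fun n => le_iSup (fun s : ℝ≥0 => (𝓕 s : MeasurableSpace Ω)) _) ?_
      refine iSup_le fun s => ?_
      exact le_trans (𝓕.mono (Nat.le_ceil s)) (le_iSup (fun n : ℕ => (ℱn n : MeasurableSpace Ω)) ⌈s⌉₊)
    have hLevy : Tendsto (fun n => eLpNorm (μ[F|ℱn n] - F) 1 μ) atTop (nhds 0) :=
      hFint.tendsto_eLpNorm_condExp (by rw [hsupeq]; exact hFmeas)
    set c : ℝ≥0∞ := eLpNorm (μ[F|𝓕 t] - μ[F|𝓖 t]) 1 μ with hc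
    have key : ∀ n : ℕ, t ≤ (n : ℝ≥0) → c ≤ eLpNorm (μ[F|ℱn n] - F) 1 μ := by
      intro n hn
      have h1 : μ[μ[F|𝓕 (n : ℝ≥0)]|𝓖 t] =ᵐ[μ] μ[F|𝓕 t] := hMG.condExp_ae_eq hn
      have h2 : μ[(μ[F|𝓕 (n : ℝ≥0)] - F)|𝓖 t] =ᵐ[μ]
          μ[μ[F|𝓕 (n : ℝ≥0)]|𝓖 t] - μ[F|𝓖 t] := condExp_sub integrable_condExp hFint _
      have heq : μ[F|𝓕 t] - μ[F|𝓖 t] =ᵐ[μ] μ[(μ[F|𝓕 (n : ℝ≥0)] - F)|𝓖 t] := by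
        filter_upwards [h1, h2] with ω hω1 hω2
        simp only [Pi.sub_apply] at hω1 hω2 ⊢
        rw [hω2, hω1]
      calc c = eLpNorm (μ[(μ[F|𝓕 (n : ℝ≥0)] - F)|𝓖 t]) 1 μ := eLpNorm_congr_ae heq
        _ ≤ eLpNorm (μ[F|𝓕 (n : ℝ≥0)] - F) 1 μ := eLpNorm_one_condExp_le_eLpNorm _
    have hc0 : c = 0 := by
      refine le_antisymm ?_ zero_le
      refine ge_of_tendsto hLevy ?_
      filter_upwards [eventually_ge_atTop ⌈t⌉₊] with n hn
      exact key n (le_trans (Nat.le_ceil t) (by exact_mod_cast hn))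
    have hae : μ[F|𝓕 t] - μ[F|𝓖 t] =ᵐ[μ] 0 := by
      refine (eLpNorm_eq_zero_iff ?_ one_ne_zero).1 hc0
      exact ((stronglyMeasurable_condExp.mono (𝓕.le t)).aestronglyMeasurable).sub
        ((stronglyMeasurable_condExp.mono (𝓖.le t)).aestronglyMeasurable)
    filter_upwards [hae] with ω hω
    have := sub_eq_zero.1 hω
    simpa using this.symm
  · -- projection property ⇒ (H)
    intro h M hM
    refine ⟨fun u => (hM.stronglyAdapted u).mono (hle u), fun s t hst => ?_⟩
    set X : Ω → ℝ := M t with hX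
    have hXint : Integrable X μ := hM.integrable t
    have hXsm : StronglyMeasurable[𝓕 t] X := hM.stronglyAdapted t
    have hXsm' : StronglyMeasurable[⨆ u : ℝ≥0, (𝓕 u : MeasurableSpace Ω)] X :=
      hXsm.mono (le_iSup (fun u : ℝ≥0 => (𝓕 u : MeasurableSpace Ω)) t)
    have hXm : StronglyMeasurable X := hXsm.mono (𝓕.le t)
    -- truncations
    set Xi : ℕ → Ω → ℝ := fun n ω => max (-(n : ℝ)) (min (X ω) n) with hXi
    have hXi_sm : ∀ n, StronglyMeasurable[⨆ u : ℝ≥0, (𝓕 u : MeasurableSpace Ω)] (Xi n) :=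
      fun n => (measurable_const.max (hXsm'.measurable.min measurable_const)).stronglyMeasurable
    have hXi_bd : ∀ n ω, |Xi n ω| ≤ (n : ℝ) := by
      intro n ω
      rw [abs_le]
      constructor
      · exact le_max_left _ _
      · exact max_le (le_trans (neg_nonpos.2 (Nat.cast_nonneg n)) (Nat.cast_nonneg n))
          (min_le_right _ _)
    have hXi_abs : ∀ n ω, |Xi n ω| ≤ |X ω| := by
      intro n ω
      rw [abs_le]
      constructor
      · refine le_trans ?_ (le_max_right _ _)
        exact le_min (neg_abs_le _) (le_trans (neg_nonpos.2 (abs_nonneg _)) (Nat.cast_nonneg n))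
      · exact max_le (le_trans (neg_nonpos.2 (Nat.cast_nonneg n)) (abs_nonneg _))
          (le_trans (min_le_left _ _) (le_abs_self _))
    have hXi_int : ∀ n, Integrable (Xi n) μ := fun n =>
      (integrable_const ((n : ℝ))).mono' ((hXi_sm n).mono hm'le).aestronglyMeasurable
        (Filter.Eventually.of_forall fun ω => by simpa [Real.norm_eq_abs] using hXi_bd n ω)
    have hXi_tendsto : ∀ ω, ∀ n : ℕ, |X ω| ≤ n → Xi n ω = X ω := by
      intro ω n hn
      have h1 : X ω ≤ n := le_trans (le_abs_self _) hn
      have h2 : -(n : ℝ) ≤ X ω := by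
        have := neg_le_neg hn
        exact le_trans this (neg_abs_le _)
      rw [hXi]
      simp only [min_eq_left h1, max_eq_right h2]
    -- L¹ convergence of truncations
    have hδ : Tendsto (fun n => eLpNorm (Xi n - X) 1 μ) atTop (nhds 0) := by
      simp_rw [eLpNorm_one_eq_lintegral_enorm]
      have h0 : Tendsto (fun n => ∫⁻ ω, (‖(Xi n - X) ω‖₊ : ℝ≥0∞) ∂μ) atTop
          (nhds (∫⁻ _ω, (0 : ℝ≥0∞) ∂μ)) := by
        refine tendsto_lintegral_of_dominated_convergence (fun ω => 2 * (‖X ω‖₊ : ℝ≥0∞)) ?_ ?_ ?_ ?_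
        · intro n
          exact ((((hXi_sm n).mono hm'le).sub hXm).measurable.nnnorm).coe_nnreal_ennreal
        · intro n
          refine Filter.Eventually.of_forall fun ω => ?_
          have h1 : ‖Xi n ω - X ω‖₊ ≤ ‖Xi n ω‖₊ + ‖X ω‖₊ := nnnorm_sub_le _ _
          have h2 : ‖Xi n ω‖₊ ≤ ‖X ω‖₊ := by
            rw [← NNReal.coe_le_coe]
            simpa [Real.norm_eq_abs, coe_nnnorm] using hXi_abs n ω
          calc (‖(Xi n - X) ω‖₊ : ℝ≥0∞) = (‖Xi n ω - X ω‖₊ : ℝ≥0∞) := rfl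
            _ ≤ (‖Xi n ω‖₊ : ℝ≥0∞) + ‖X ω‖₊ := by exact_mod_cast h1
            _ ≤ (‖X ω‖₊ : ℝ≥0∞) + ‖X ω‖₊ := add_le_add_left (by exact_mod_cast h2) _
            _ = 2 * ‖X ω‖₊ := (two_mul _).symm
        · rw [lintegral_const_mul' _ _ (by norm_num)]
          exact ENNReal.mul_ne_top (by norm_num) hXint.2.ne
        · refine Filter.Eventually.of_forall fun ω => ?_
          refine tendsto_atTop_of_eventually_const (i₀ := ⌈|X ω|⌉₊) fun n hn => ?_
          have : Xi n ω = X ω := hXi_tendsto ω n (le_trans (Nat.le_ceil _) (by exact_mod_cast hn))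
          simp [Pi.sub_apply, this]
      simpa [enorm_eq_nnnorm] using h0
    -- projections agree on truncations
    have hXi_eq : ∀ n, μ[Xi n|𝓖 s] =ᵐ[μ] μ[Xi n|𝓕 s] :=
      fun n => h s (Xi n) (hXi_sm n) ⟨n, hXi_bd n⟩
    -- pass to the limit via set integrals
    have hmain : μ[X|𝓕 s] =ᵐ[μ] μ[X|𝓖 s] := by
      refine ae_eq_condExp_of_forall_setIntegral_eq (𝓖.le s) hXint
        (fun G _ _ => integrable_condExp.integrableOn) (fun G hG _ => ?_)
        (stronglyMeasurable_condExp.mono (hle s)).aestronglyMeasurable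
      -- goal: ∫ x in G, μ[X|𝓕 s] x ∂μ = ∫ x in G, X x ∂μ
      have hA : Tendsto (fun n => ∫ x in G, Xi n x ∂μ) atTop (nhds (∫ x in G, X x ∂μ)) := by
        refine tendsto_integral_of_L1' (μ := μ.restrict G) X hXint.restrict.aestronglyMeasurable
          (Filter.Eventually.of_forall fun n => (hXi_int n).restrict) ?_
        refine tendsto_of_tendsto_of_tendsto_of_le_of_le tendsto_const_nhds hδ
          (fun n => zero_le) (fun n => eLpNorm_mono_measure _ Measure.restrict_le_self)
      have hB : Tendsto (fun n => ∫ x in G, (μ[Xi n|𝓕 s]) x ∂μ) atTop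
          (nhds (∫ x in G, (μ[X|𝓕 s]) x ∂μ)) := by
        refine tendsto_integral_of_L1' (μ := μ.restrict G) (μ[X|𝓕 s])
          integrable_condExp.restrict.aestronglyMeasurable
          (Filter.Eventually.of_forall fun n => integrable_condExp.restrict) ?_
        refine tendsto_of_tendsto_of_tendsto_of_le_of_le tendsto_const_nhds hδ
          (fun n => zero_le) (fun n => ?_)
        refine le_trans (eLpNorm_mono_measure _ Measure.restrict_le_self) ?_
        have hsub : μ[Xi n|𝓕 s] - μ[X|𝓕 s] =ᵐ[μ] μ[(Xi n - X)|𝓕 s] :=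
          (condExp_sub (hXi_int n) hXint _).symm
        calc eLpNorm (μ[Xi n|𝓕 s] - μ[X|𝓕 s]) 1 μ
            = eLpNorm (μ[(Xi n - X)|𝓕 s]) 1 μ := eLpNorm_congr_ae hsub
          _ ≤ eLpNorm (Xi n - X) 1 μ := eLpNorm_one_condExp_le_eLpNorm _
      have hAB : ∀ n, ∫ x in G, Xi n x ∂μ = ∫ x in G, (μ[Xi n|𝓕 s]) x ∂μ := by
        intro n
        have e1 : ∫ x in G, (μ[Xi n|𝓖 s]) x ∂μ = ∫ x in G, Xi n x ∂μ :=
          setIntegral_condExp (𝓖.le s) (hXi_int n) hG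
        have e2 : ∫ x in G, (μ[Xi n|𝓖 s]) x ∂μ = ∫ x in G, (μ[Xi n|𝓕 s]) x ∂μ :=
          integral_congr_ae (ae_restrict_of_ae (hXi_eq n))
        rw [← e1, e2]
      have hA' : Tendsto (fun n => ∫ x in G, (μ[Xi n|𝓕 s]) x ∂μ) atTop
          (nhds (∫ x in G, X x ∂μ)) := hA.congr hAB
      exact (tendsto_nhds_unique hA' hB).symm
    calc μ[M t|𝓖 s] =ᵐ[μ] μ[M t|𝓕 s] := hmain.symm
      _ =ᵐ[μ] M s := hM.condExp_ae_eq hst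


end Enlargement
end
end

section
/- Characterization of (H) via projections of bounded G_t-functionals: Let (Ω,F,P) be a probability space with filtrations (F_t) ⊆ (G_t) satisfying the usual assumptions. Then every (F_t)-martingale is a (G_t)-martingale if and only if for every t ≥ 0 and every bounded G_t-measurable random variable G one has E[G | F_∞] = E[G | F_t] almost surely. -/
open MeasureTheory Filter Set ProbabilityTheory
open scoped NNReal ENNReal

noncomputable section

namespace Enlargement

variable {Ω : Type*} {m : MeasurableSpace Ω}

/-- Swap lemma: `∫ f ⬝ E[g|m'] = ∫ E[f|m'] ⬝ g` for `f` integrable and `g` bounded. -/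
lemma integral_mul_condexp_swap {μ : Measure Ω} [IsProbabilityMeasure μ]
    {m' : MeasurableSpace Ω} (hm : m' ≤ m) {f g : Ω → ℝ}
    (hf : Integrable f μ) (hgm : AEStronglyMeasurable[m] g μ)
    {C : ℝ} (hgC : ∀ ω, ‖g ω‖ ≤ C) :
    ∫ ω, f ω * (μ[g|m']) ω ∂μ = ∫ ω, (μ[f|m']) ω * g ω ∂μ := by
  have hg_int : Integrable g μ :=
    Integrable.mono' (integrable_const C) hgm (ae_of_all _ hgC)
  have hCg' : ∀ᵐ ω ∂μ, |g ω| ≤ (C.toNNReal : ℝ) :=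
    ae_of_all _ fun ω => le_trans (by simpa [Real.norm_eq_abs] using hgC ω)
      (Real.le_coe_toNNReal C)
  have hbdd : ∀ᵐ ω ∂μ, |(μ[g|m']) ω| ≤ (C.toNNReal : ℝ) := ae_bdd_condExp_of_ae_bdd hCg'
  have h_int1 : Integrable (fun ω => (μ[g|m']) ω * f ω) μ :=
    hf.bdd_mul ((stronglyMeasurable_condExp.mono hm).aestronglyMeasurable)
      (hbdd.mono fun ω hω => by rw [Real.norm_eq_abs]; exact hω)
  have h_int2 : Integrable (fun ω => g ω * (μ[f|m']) ω) μ :=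
    integrable_condExp.bdd_mul hgm (ae_of_all _ hgC)
  have h1 : μ[(fun ω => (μ[g|m']) ω * f ω)|m'] =ᵐ[μ] fun ω => (μ[g|m']) ω * (μ[f|m']) ω :=
    condExp_mul_of_stronglyMeasurable_left stronglyMeasurable_condExp h_int1 hf
  have h2 : μ[(fun ω => (μ[f|m']) ω * g ω)|m'] =ᵐ[μ] fun ω => (μ[f|m']) ω * (μ[g|m']) ω :=
    condExp_mul_of_stronglyMeasurable_left stronglyMeasurable_condExp
      (by rw [mul_comm]; exact h_int2) hg_int
  calc ∫ ω, f ω * (μ[g|m']) ω ∂μ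
      = ∫ ω, (μ[g|m']) ω * f ω ∂μ := by simp_rw [mul_comm]
    _ = ∫ ω, (μ[(fun ω => (μ[g|m']) ω * f ω)|m']) ω ∂μ := (integral_condExp hm).symm
    _ = ∫ ω, (μ[g|m']) ω * (μ[f|m']) ω ∂μ := integral_congr_ae h1
    _ = ∫ ω, (μ[f|m']) ω * (μ[g|m']) ω ∂μ := by simp_rw [mul_comm]
    _ = ∫ ω, (μ[(fun ω => (μ[f|m']) ω * g ω)|m']) ω ∂μ := (integral_congr_ae h2).symm
    _ = ∫ ω, (μ[f|m']) ω * g ω ∂μ := integral_condExp hm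

/-- **(H) via projections of bounded `𝓖 t`-functionals.** Every `𝓕`-martingale is a
`𝓖`-martingale iff for every `t` and every bounded `𝓖 t`-measurable `G`,
`E[G | 𝓕_∞] = E[G | 𝓕 t]` a.s. -/
theorem H_iff_proj_Gt {μ : Measure Ω} [IsProbabilityMeasure μ]
    (𝓕 𝓖 : Filtration ℝ≥0 m)
    (h𝓕 : UsualConditions 𝓕 μ) (h𝓖 : UsualConditions 𝓖 μ)
    (hle : ∀ t : ℝ≥0, (𝓕 t : MeasurableSpace Ω) ≤ 𝓖 t) :
    (∀ M : ℝ≥0 → Ω → ℝ, Martingale M 𝓕 μ → Martingale M 𝓖 μ) ↔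
      (∀ (t : ℝ≥0) (G : Ω → ℝ),
        StronglyMeasurable[𝓖 t] G →
        (∃ C : ℝ, ∀ ω, |G ω| ≤ C) →
        μ[G | (⨆ s : ℝ≥0, (𝓕 s : MeasurableSpace Ω))] =ᵐ[μ] μ[G | 𝓕 t]) := by
  have hFinf : (⨆ s : ℝ≥0, (𝓕 s : MeasurableSpace Ω)) ≤ m := iSup_le fun s => 𝓕.le s
  constructor
  · -- (H) ⟹ projection property
    intro hmart t G hGmeas hGbdd
    obtain ⟨C, hC⟩ := hGbdd
    have hG_int : Integrable G μ :=
      Integrable.mono' (integrable_const C) ((hGmeas.mono (𝓖.le t)).aestronglyMeasurable)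
        (ae_of_all _ fun ω => by simpa [Real.norm_eq_abs] using hC ω)
    refine (ae_eq_condExp_of_forall_setIntegral_eq hFinf hG_int
      (fun A _ _ => integrable_condExp.integrableOn) (fun A hA hμA => ?_)
      (StronglyMeasurable.aestronglyMeasurable
        (stronglyMeasurable_condExp.mono (le_iSup (fun s => (𝓕 s : MeasurableSpace Ω)) t)))).symm
    -- prove ∫_A E[G|𝓕 t] = ∫_A G for all A ∈ 𝓕∞ by the π-λ theorem
    clear hμA
    revert A hA
    have h_eq : (⨆ s : ℝ≥0, (𝓕 s : MeasurableSpace Ω)) =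
        MeasurableSpace.generateFrom (⋃ s : ℝ≥0, {A | MeasurableSet[𝓕 s] A}) :=
      (MeasurableSpace.generateFrom_iUnion_measurableSet _).symm
    have h_pi : IsPiSystem (⋃ s : ℝ≥0, {A | MeasurableSet[𝓕 s] A}) := by
      rintro A hA B hB -
      simp only [Set.mem_iUnion, Set.mem_setOf_eq] at hA hB ⊢
      obtain ⟨a, ha⟩ := hA; obtain ⟨b, hb⟩ := hB
      exact ⟨a ⊔ b, (𝓕.mono le_sup_left _ ha).inter (𝓕.mono le_sup_right _ hb)⟩
    refine @MeasurableSpace.induction_on_inter Ω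
      (⨆ s : ℝ≥0, (𝓕 s : MeasurableSpace Ω))
      (fun A _ => ∫ x in A, (μ[G|𝓕 t]) x ∂μ = ∫ x in A, G x ∂μ)
      (⋃ s : ℝ≥0, {A | MeasurableSet[𝓕 s] A}) h_eq h_pi (by simp)
      (fun A hA => ?_) (fun A hA hrec => ?_) (fun f hdisj hfm hrec => ?_)
    · -- basic sets
      simp only [Set.mem_iUnion, Set.mem_setOf_eq] at hA
      obtain ⟨s, hAs⟩ := hA
      have hAu : MeasurableSet[𝓕 (s ⊔ t)] A := 𝓕.mono le_sup_left _ hAs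
      have hAm : MeasurableSet A := 𝓕.le (s ⊔ t) _ hAu
      set I : Ω → ℝ := A.indicator (fun _ => (1 : ℝ)) with hI_def
      have hI_SM : StronglyMeasurable[𝓕 (s ⊔ t)] I :=
        stronglyMeasurable_const.indicator hAu
      have hI_int : Integrable I μ := (integrable_const 1).indicator hAm
      have hI_bdd : ∀ ω, ‖I ω‖ ≤ 1 := fun ω => by
        by_cases hω : ω ∈ A <;> simp [hI_def, indicator_of_mem, indicator_of_notMem, hω]
      -- the (H) hypothesis applied to the martingale E[I | 𝓕 ·]
      have hMG : Martingale (fun r => μ[I|𝓕 r]) 𝓖 μ := hmart _ (martingale_condExp I 𝓕 μ)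
      have hkey : μ[I|𝓖 t] =ᵐ[μ] μ[I|𝓕 t] := by
        have h2 : μ[μ[I|𝓕 (s ⊔ t)]|𝓖 t] =ᵐ[μ] μ[I|𝓕 t] := hMG.2 t (s ⊔ t) le_sup_right
        rwa [condExp_of_stronglyMeasurable (𝓕.le (s ⊔ t)) hI_SM hI_int] at h2
      have hmulI : ∀ h : Ω → ℝ, (fun x => h x * I x) = A.indicator h := by
        intro h; funext x
        by_cases hx : x ∈ A <;>
          simp [hI_def, indicator_of_mem, indicator_of_notMem, hx]
      have hGI_int : Integrable (fun x => G x * I x) μ := by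
        rw [hmulI]; exact hG_int.indicator hAm
      calc ∫ x in A, (μ[G|𝓕 t]) x ∂μ
          = ∫ x, (μ[G|𝓕 t]) x * I x ∂μ := by rw [hmulI, integral_indicator hAm]
        _ = ∫ x, G x * (μ[I|𝓕 t]) x ∂μ :=
            (integral_mul_condexp_swap (𝓕.le t) hG_int
              ((hI_SM.mono (𝓕.le (s ⊔ t))).aestronglyMeasurable) hI_bdd).symm
        _ = ∫ x, G x * (μ[I|𝓖 t]) x ∂μ := by
            refine integral_congr_ae ?_
            filter_upwards [hkey] with x hx; rw [hx]
        _ = ∫ x, (μ[(fun x => G x * I x)|𝓖 t]) x ∂μ := by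
            refine (integral_congr_ae ?_).symm
            exact condExp_mul_of_stronglyMeasurable_left hGmeas hGI_int hI_int
        _ = ∫ x, G x * I x ∂μ := integral_condExp (𝓖.le t)
        _ = ∫ x in A, G x ∂μ := by rw [hmulI, integral_indicator hAm]
    · -- complements
      have hAm : MeasurableSet A := hFinf _ hA
      have e1 := integral_add_compl hAm (integrable_condExp (f := G) (m := 𝓕 t) (μ := μ))
      have e2 := integral_add_compl hAm hG_int
      have e3 : ∫ x, (μ[G|𝓕 t]) x ∂μ = ∫ x, G x ∂μ := integral_condExp (𝓕.le t)
      linarith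
    · -- countable disjoint unions
      have hfm' : ∀ i, MeasurableSet (f i) := fun i => hFinf _ (hfm i)
      show ∫ x in ⋃ i, f i, (μ[G|𝓕 t]) x ∂μ = ∫ x in ⋃ i, f i, G x ∂μ
      rw [integral_iUnion hfm' hdisj
          ((integrable_condExp : Integrable (μ[G|𝓕 t]) μ).integrableOn),
        integral_iUnion hfm' hdisj hG_int.integrableOn]
      exact tsum_congr hrec
  · -- projection property ⟹ (H)
    intro hproj M hM
    refine ⟨fun r => (hM.stronglyAdapted r).mono (hle r), fun r u hru => ?_⟩
    refine (ae_eq_condExp_of_forall_setIntegral_eq (𝓖.le r) (hM.integrable u)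
      (fun A _ _ => (hM.integrable r).integrableOn) (fun A hA _ => ?_)
      (StronglyMeasurable.aestronglyMeasurable ((hM.stronglyAdapted r).mono (hle r)))).symm
    have hAm : MeasurableSet A := 𝓖.le r _ hA
    set I : Ω → ℝ := A.indicator (fun _ => (1 : ℝ)) with hI_def
    have hI_SM : StronglyMeasurable[𝓖 r] I := stronglyMeasurable_const.indicator hA
    have hI_bdd : ∀ ω, |I ω| ≤ 1 := fun ω => by
      by_cases hω : ω ∈ A <;> simp [hI_def, indicator_of_mem, indicator_of_notMem, hω]
    have hI_int : Integrable I μ := (integrable_const 1).indicator hAm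
    have hkey := hproj r I hI_SM ⟨1, hI_bdd⟩
    have hmulI : ∀ h : Ω → ℝ, (fun x => h x * I x) = A.indicator h := by
      intro h; funext x
      by_cases hx : x ∈ A <;>
        simp [hI_def, indicator_of_mem, indicator_of_notMem, hx]
    have hMuI_int : Integrable (fun x => M u x * I x) μ := by
      rw [hmulI]; exact (hM.integrable u).indicator hAm
    have hMu_SM : StronglyMeasurable[⨆ s : ℝ≥0, (𝓕 s : MeasurableSpace Ω)] (M u) :=
      (hM.stronglyAdapted u).mono (le_iSup (fun s => (𝓕 s : MeasurableSpace Ω)) u)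
    calc ∫ x in A, M r x ∂μ
        = ∫ x, M r x * I x ∂μ := by rw [hmulI, integral_indicator hAm]
      _ = ∫ x, (μ[M u|𝓕 r]) x * I x ∂μ := by
          refine integral_congr_ae ?_
          filter_upwards [hM.2 r u hru] with x hx; rw [hx]
      _ = ∫ x, M u x * (μ[I|𝓕 r]) x ∂μ :=
          (integral_mul_condexp_swap (𝓕.le r) (hM.integrable u)
            ((hI_SM.mono (𝓖.le r)).aestronglyMeasurable)
            (fun ω => by simpa [Real.norm_eq_abs] using hI_bdd ω)).symm
      _ = ∫ x, M u x * (μ[I|(⨆ s : ℝ≥0, (𝓕 s : MeasurableSpace Ω))]) x ∂μ := by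
          refine (integral_congr_ae ?_).symm
          filter_upwards [hkey] with x hx; rw [hx]
      _ = ∫ x, (μ[(fun x => M u x * I x)|(⨆ s : ℝ≥0, (𝓕 s : MeasurableSpace Ω))]) x ∂μ := by
          refine (integral_congr_ae ?_).symm
          exact condExp_mul_of_stronglyMeasurable_left hMu_SM hMuI_int hI_int
      _ = ∫ x, M u x * I x ∂μ := integral_condExp hFinf
      _ = ∫ x in A, M u x ∂μ := by rw [hmulI, integral_indicator hAm]


end Enlargement
end
end

section
/- Characterization of (H) for progressive enlargements via the conditional law of ρ: Let (Ω,F,(F_t)_{t≥0},P) be a filtered probability space satisfying the usual hypotheses, ρ a random time, and (F_t^ρ) the progressive enlargement of (F_t) by ρ. Then every (F_t)-martingale is an (F_t^ρ)-martingale if and only if for all 0 ≤ s ≤ t one has P(ρ ≤ s | F_t) = P(ρ ≤ s | F_∞) almost surely. -/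
open MeasureTheory Filter Set ProbabilityTheory
open scoped NNReal ENNReal

noncomputable section

namespace EnlargementAux


variable {Ω : Type*} {m : MeasurableSpace Ω} {μ : Measure Ω} [IsProbabilityMeasure μ]

/-- abbreviation for real indicator of a set -/
def ind (G : Set Ω) : Ω → ℝ := Set.indicator G (fun _ => (1 : ℝ))

lemma ind_nonneg (G : Set Ω) (x : Ω) : 0 ≤ ind G x := by
  unfold ind; by_cases h : x ∈ G <;> simp [h]

lemma ind_norm_le (G : Set Ω) (x : Ω) : ‖ind G x‖ ≤ 1 := by
  unfold ind; by_cases h : x ∈ G <;> simp [h]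

lemma ind_stronglyMeasurable {m₀ : MeasurableSpace Ω} {G : Set Ω}
    (hG : MeasurableSet[m₀] G) : StronglyMeasurable[m₀] (ind G) :=
  stronglyMeasurable_const.indicator hG

lemma integrableOn_of_integrable {Y : Ω → ℝ} (hY : Integrable Y μ) (s : Set Ω) :
    IntegrableOn Y s μ := hY.integrableOn

lemma ind_integrable {G : Set Ω} (hG : MeasurableSet G) : Integrable (ind G) μ :=
  (integrable_const (1 : ℝ)).indicator hG

lemma ind_inter (F B : Set Ω) (x : Ω) : ind (F ∩ B) x = ind F x * ind B x := by
  unfold ind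
  by_cases hF : x ∈ F <;> by_cases hB : x ∈ B <;>
    simp [Set.indicator_apply, hF, hB]

lemma integral_ind (G : Set Ω) (hG : MeasurableSet G) :
    ∫ x, ind G x ∂μ = (μ G).toReal := by
  unfold ind
  rw [integral_indicator_const (1 : ℝ) hG]
  simp
  rfl

lemma setIntegral_ind {G A : Set Ω} (hG : MeasurableSet G) :
    ∫ x in A, ind G x ∂μ = (μ (G ∩ A)).toReal := by
  unfold ind
  rw [integral_indicator_const (1 : ℝ) hG, measureReal_def, Measure.restrict_apply hG]
  simp

lemma setIntegral_eq_ind_mul {G : Set Ω} (hG : MeasurableSet G) (X : Ω → ℝ) :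
    ∫ x in G, X x ∂μ = ∫ x, ind G x * X x ∂μ := by
  rw [← integral_indicator hG]
  refine integral_congr_ae (Eventually.of_forall fun x => ?_)
  unfold ind
  by_cases h : x ∈ G <;> simp [Set.indicator_apply, h]

lemma norm_condexp_ind_le_one {m₀ : MeasurableSpace Ω} (G : Set Ω) (hG : MeasurableSet[m] G) :
    ∀ᵐ x ∂μ, ‖(μ[ind G|m₀]) x‖ ≤ 1 := by
  by_cases hm : m₀ ≤ m
  swap
  · rw [condExp_of_not_le hm]; filter_upwards with x; simp
  haveI : SigmaFinite (μ.trim hm) := inferInstance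
  have h0 : 0 ≤ᵐ[μ] μ[ind G|m₀] :=
    condExp_nonneg (Eventually.of_forall (ind_nonneg G))
  have h1 : μ[ind G|m₀] ≤ᵐ[μ] μ[(fun _ => (1:ℝ))|m₀] := by
    refine condExp_mono (ind_integrable hG) (integrable_const _)
      (Eventually.of_forall fun x => ?_)
    unfold ind; by_cases h : x ∈ G <;> simp [Set.indicator_apply, h]
  have h1' : μ[(fun _ => (1:ℝ))|m₀] = fun _ => (1:ℝ) := condExp_const hm (1:ℝ)
  filter_upwards [h0, h1] with x hx0 hx1
  have hx0' : (0:ℝ) ≤ (μ[ind G|m₀]) x := hx0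
  have hx1' : (μ[ind G|m₀]) x ≤ 1 := by rw [h1'] at hx1; exact hx1
  rw [Real.norm_eq_abs, abs_le]
  exact ⟨by linarith, hx1'⟩

/-- pull-out: `∫ W * Z = ∫ W * E[Z|m₀]` for `W` bounded `m₀`-measurable, `Z` integrable. -/
lemma integral_mul_condexp_right {m₀ : MeasurableSpace Ω} (hm : m₀ ≤ m) {W Z : Ω → ℝ} {c : ℝ}
    (hW : StronglyMeasurable[m₀] W) (hWb : ∀ᵐ x ∂μ, ‖W x‖ ≤ c) (hZ : Integrable Z μ) :
    ∫ x, W x * Z x ∂μ = ∫ x, W x * (μ[Z|m₀]) x ∂μ := by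
  have hWZ : Integrable (fun x => W x * Z x) μ :=
    hZ.bdd_mul ((hW.mono hm).aestronglyMeasurable) hWb
  have h1 : μ[(fun x => W x * Z x)|m₀] =ᵐ[μ] fun x => W x * (μ[Z|m₀]) x := by
    have := condExp_mul_of_stronglyMeasurable_left hW (μ := μ) (g := Z) hWZ hZ
    exact this
  calc ∫ x, W x * Z x ∂μ = ∫ x, (μ[(fun x => W x * Z x)|m₀]) x ∂μ :=
        (integral_condExp hm).symm
    _ = ∫ x, W x * (μ[Z|m₀]) x ∂μ := integral_congr_ae h1

/-- `∫ V * X = ∫ E[V|m₀] * X` for `V` bounded integrable, `X` integrable `m₀`-measurable. -/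
lemma integral_mul_condexp_left {m₀ : MeasurableSpace Ω} (hm : m₀ ≤ m) {V X : Ω → ℝ} {c : ℝ}
    (hV : Integrable V μ) (hVb : ∀ᵐ x ∂μ, ‖V x‖ ≤ c)
    (hX : StronglyMeasurable[m₀] X) (hXi : Integrable X μ) :
    ∫ x, V x * X x ∂μ = ∫ x, (μ[V|m₀]) x * X x ∂μ := by
  have hXV : Integrable (fun x => X x * V x) μ :=
    (hXi.bdd_mul hV.1 hVb).congr (Eventually.of_forall fun x => mul_comm _ _)
  have h1 : μ[(fun x => X x * V x)|m₀] =ᵐ[μ] fun x => X x * (μ[V|m₀]) x :=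
    condExp_mul_of_stronglyMeasurable_left hX hXV hV
  calc ∫ x, V x * X x ∂μ = ∫ x, X x * V x ∂μ := by
        refine integral_congr_ae (Eventually.of_forall fun x => ?_); ring
    _ = ∫ x, (μ[(fun x => X x * V x)|m₀]) x ∂μ := (integral_condExp hm).symm
    _ = ∫ x, X x * (μ[V|m₀]) x ∂μ := integral_congr_ae h1
    _ = ∫ x, (μ[V|m₀]) x * X x ∂μ := by
        refine integral_congr_ae (Eventually.of_forall fun x => ?_); ring

/-- symmetric flip -/
lemma setIntegral_condexp_ind_symm {m₀ : MeasurableSpace Ω} (hm : m₀ ≤ m) {G A : Set Ω}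
    (hG : MeasurableSet[m] G) (hA : MeasurableSet[m] A) :
    ∫ x in A, (μ[ind G|m₀]) x ∂μ = ∫ x in G, (μ[ind A|m₀]) x ∂μ := by
  haveI : SigmaFinite (μ.trim hm) := inferInstance
  rw [setIntegral_eq_ind_mul hA, setIntegral_eq_ind_mul hG]
  rw [integral_mul_condexp_left hm (ind_integrable hA)
      (Eventually.of_forall (ind_norm_le A)) stronglyMeasurable_condExp integrable_condExp]
  rw [integral_mul_condexp_left hm (ind_integrable hG)
      (Eventually.of_forall (ind_norm_le G)) stronglyMeasurable_condExp integrable_condExp]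
  refine integral_congr_ae (Eventually.of_forall fun x => ?_); ring


/-- integral over a measurable set as a lintegral, for a.e. nonneg integrable functions -/
lemma setIntegral_eq_toReal_lintegral {Y : Ω → ℝ} (hY : Integrable Y μ) (hY0 : 0 ≤ᵐ[μ] Y)
    {A : Set Ω} (hA : MeasurableSet[m] A) :
    ∫ x in A, Y x ∂μ = (∫⁻ x in A, ENNReal.ofReal (Y x) ∂μ).toReal := by
  rw [integral_eq_lintegral_of_nonneg_ae (ae_restrict_of_ae hY0) hY.1.restrict]

/-- Extension lemma: if the set-integral identity holds on a generating π-system, it holds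
on the whole σ-algebra. -/
lemma setIntegral_eq_of_generateFrom {m₀ : MeasurableSpace Ω} (hm : m₀ ≤ m)
    {C : Set (Set Ω)} (hgen : m₀ = MeasurableSpace.generateFrom C) (hpi : IsPiSystem C)
    {G : Set Ω} (hG : MeasurableSet[m] G) {Y : Ω → ℝ}
    (hY : Integrable Y μ) (hY0 : 0 ≤ᵐ[μ] Y)
    (htot : ∫ x, Y x ∂μ = (μ G).toReal)
    (hbasic : ∀ A ∈ C, ∫ x in A, Y x ∂μ = (μ (G ∩ A)).toReal) :
    ∀ A : Set Ω, MeasurableSet[m₀] A → ∫ x in A, Y x ∂μ = (μ (G ∩ A)).toReal := by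
  set W : @Measure Ω m := μ.withDensity (fun x => ENNReal.ofReal (Y x)) with hW
  have hWfin : W Set.univ < ∞ := by
    rw [withDensity_apply _ MeasurableSet.univ, setLIntegral_univ]
    calc ∫⁻ x, ENNReal.ofReal (Y x) ∂μ ≤ ∫⁻ x, (‖Y x‖₊ : ℝ≥0∞) ∂μ := by
          refine lintegral_mono fun x => ?_
          rw [← enorm_eq_nnnorm, ← ofReal_norm]
          exact ENNReal.ofReal_le_ofReal (le_abs_self _)
      _ < ∞ := hY.2
  haveI : IsFiniteMeasure W := ⟨hWfin⟩
  have hlint : ∀ A : Set Ω, MeasurableSet[m] A → W A = ∫⁻ x in A, ENNReal.ofReal (Y x) ∂μ :=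
    fun A hA => withDensity_apply _ hA
  -- the two trimmed measures
  set ν₁ : @Measure Ω m₀ := W.trim hm with hν₁
  set ν₂ : @Measure Ω m₀ := (μ.restrict G).trim hm with hν₂
  haveI : IsFiniteMeasure ν₁ := MeasureTheory.isFiniteMeasure_trim hm
  haveI : IsFiniteMeasure ν₂ := MeasureTheory.isFiniteMeasure_trim hm
  have hkey : ∀ A : Set Ω, MeasurableSet[m₀] A →
      (W A = μ (G ∩ A) ↔ ∫ x in A, Y x ∂μ = (μ (G ∩ A)).toReal) := by
    intro A hA
    have hAm : MeasurableSet[m] A := hm _ hA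
    have h1 : ∫ x in A, Y x ∂μ = (W A).toReal := by
      rw [setIntegral_eq_toReal_lintegral hY hY0 hAm, hlint A hAm]
    have hWA : W A ≠ ∞ := ((measure_mono (Set.subset_univ A)).trans_lt hWfin).ne
    have hGA : μ (G ∩ A) ≠ ∞ := measure_ne_top μ _
    rw [h1]
    exact ⟨fun h => by rw [h], fun h => (ENNReal.toReal_eq_toReal_iff' hWA hGA).mp h⟩
  have hext : ν₁ = ν₂ := by
    refine MeasureTheory.ext_of_generate_finite C hgen hpi ?_ ?_
    · intro A hAC
      have hA : MeasurableSet[m₀] A := hgen ▸ MeasurableSpace.measurableSet_generateFrom hAC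
      have hAm : MeasurableSet[m] A := hm _ hA
      rw [hν₁, hν₂, trim_measurableSet_eq hm hA, trim_measurableSet_eq hm hA,
        Measure.restrict_apply' hG]
      · rw [Set.inter_comm A G]; exact (hkey A hA).mpr (hbasic A hAC)
    · rw [hν₁, hν₂, trim_measurableSet_eq hm (@MeasurableSet.univ Ω m₀),
        trim_measurableSet_eq hm (@MeasurableSet.univ Ω m₀), Measure.restrict_apply' hG,
        Set.univ_inter]
      refine (hkey Set.univ (@MeasurableSet.univ Ω m₀)).mpr ?_ |>.trans (by rw [Set.inter_univ])
      rw [Set.inter_univ, ← htot, Measure.restrict_univ]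
  intro A hA
  refine (hkey A hA).mp ?_
  have := congrArg (fun (ν : @Measure Ω m₀) => ν A) hext
  rw [hν₁, hν₂, trim_measurableSet_eq hm hA, trim_measurableSet_eq hm hA,
    Measure.restrict_apply' hG] at this
  rw [this, Set.inter_comm]

/-- Uniqueness wrapper: `Y` is a version of the conditional expectation of the indicator. -/
lemma ae_eq_condexp_ind {m₀ : MeasurableSpace Ω} (hm : m₀ ≤ m)
    {G : Set Ω} (hG : MeasurableSet[m] G) {Y : Ω → ℝ}
    (hY : Integrable Y μ) (hYm : AEStronglyMeasurable[m₀] Y μ)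
    (h : ∀ A : Set Ω, MeasurableSet[m₀] A → ∫ x in A, Y x ∂μ = (μ (G ∩ A)).toReal) :
    Y =ᵐ[μ] μ[ind G|m₀] := by
  haveI : SigmaFinite (μ.trim hm) := inferInstance
  exact ae_eq_condExp_of_forall_setIntegral_eq (μ := μ) (m := m₀) (m₀ := m) hm
    (ind_integrable hG) (fun s _ _ => integrableOn_of_integrable hY s)
    (fun s hs _ => by rw [h s hs, setIntegral_ind hG]) hYm



variable {Ω : Type*} {m : MeasurableSpace Ω} {μ : Measure Ω} [IsProbabilityMeasure μ]

/-- generating rectangles for the σ-algebra `𝓕 u ⊔ σ(ρ ∧ u)` -/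
def recC (𝓕 : Filtration ℝ≥0 m) (ρ : Ω → ℝ≥0∞) (u : ℝ≥0) : Set (Set Ω) :=
  {S | ∃ F, MeasurableSet[𝓕 u] F ∧ ∃ c : ℝ≥0∞,
      S = F ∩ ((fun ω => min (ρ ω) (u : ℝ≥0∞)) ⁻¹' (Set.Iic c))}

lemma isPiSystem_recC (𝓕 : Filtration ℝ≥0 m) (ρ : Ω → ℝ≥0∞) (u : ℝ≥0) :
    IsPiSystem (recC 𝓕 ρ u) := by
  rintro S ⟨F, hF, c, rfl⟩ T ⟨F', hF', c', rfl⟩ -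
  refine ⟨F ∩ F', hF.inter hF', min c c', ?_⟩
  ext x
  simp only [Set.mem_inter_iff, Set.mem_preimage, Set.mem_Iic, le_min_iff]
  tauto

lemma generateFrom_recC (𝓕 : Filtration ℝ≥0 m) (ρ : Ω → ℝ≥0∞) (u : ℝ≥0) :
    ((𝓕 u : MeasurableSpace Ω) ⊔
        MeasurableSpace.comap (fun ω => min (ρ ω) ((u : ℝ≥0) : ℝ≥0∞)) inferInstance)
      = MeasurableSpace.generateFrom (recC 𝓕 ρ u) := by
  apply le_antisymm
  · refine sup_le ?_ ?_
    · intro s hs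
      refine MeasurableSpace.measurableSet_generateFrom ⟨s, hs, ⊤, ?_⟩
      simp
    · have hb : (inferInstance : MeasurableSpace ℝ≥0∞)
          = MeasurableSpace.generateFrom (Set.range Set.Iic) :=
        (BorelSpace.measurable_eq (α := ℝ≥0∞)).trans (borel_eq_generateFrom_Iic ℝ≥0∞)
      rw [hb, MeasurableSpace.comap_generateFrom]
      refine MeasurableSpace.generateFrom_le ?_
      rintro t ⟨t', ⟨c, rfl⟩, rfl⟩
      exact MeasurableSpace.measurableSet_generateFrom
        ⟨Set.univ, MeasurableSet.univ, c, (Set.univ_inter _).symm⟩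
  · refine MeasurableSpace.generateFrom_le ?_
    rintro S ⟨F, hF, c, rfl⟩
    have h1 : MeasurableSet[(𝓕 u : MeasurableSpace Ω) ⊔
        MeasurableSpace.comap (fun ω => min (ρ ω) ((u : ℝ≥0) : ℝ≥0∞)) inferInstance] F :=
      (MeasurableSpace.le_def.mp le_sup_left) F hF
    have h2 : MeasurableSet[(𝓕 u : MeasurableSpace Ω) ⊔
        MeasurableSpace.comap (fun ω => min (ρ ω) ((u : ℝ≥0) : ℝ≥0∞)) inferInstance]
        ((fun ω => min (ρ ω) ((u : ℝ≥0) : ℝ≥0∞)) ⁻¹' (Set.Iic c)) :=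
      (MeasurableSpace.le_def.mp le_sup_right) _ ⟨Set.Iic c, measurableSet_Iic, rfl⟩
    exact h1.inter h2



variable {Ω : Type*} {m : MeasurableSpace Ω} {μ : Measure Ω} [IsProbabilityMeasure μ]

lemma condC_rect (𝓕 : Filtration ℝ≥0 m) (ρ : Ω → ℝ≥0∞) (hρ : Measurable ρ)
    (hC : ∀ s t : ℝ≥0, s ≤ t →
      μ[ind {ω | ρ ω ≤ (s : ℝ≥0∞)}|𝓕 t] =ᵐ[μ]
      μ[ind {ω | ρ ω ≤ (s : ℝ≥0∞)}|⨆ v : ℝ≥0, (𝓕 v : MeasurableSpace Ω)])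
    (u : ℝ≥0) {A : Set Ω} (hA : MeasurableSet[⨆ v : ℝ≥0, (𝓕 v : MeasurableSpace Ω)] A)
    {F : Set Ω} (hF : MeasurableSet[𝓕 u] F) (c : ℝ≥0∞) :
    ∫ x in (F ∩ ((fun ω => min (ρ ω) ((u : ℝ≥0) : ℝ≥0∞)) ⁻¹' (Set.Iic c))),
        (μ[ind A|𝓕 u]) x ∂μ
      = (μ (A ∩ (F ∩ ((fun ω => min (ρ ω) ((u : ℝ≥0) : ℝ≥0∞)) ⁻¹' (Set.Iic c))))).toReal := by
  have hFinf : (⨆ v : ℝ≥0, (𝓕 v : MeasurableSpace Ω)) ≤ m := iSup_le fun v => 𝓕.le v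
  have hle : (𝓕 u : MeasurableSpace Ω) ≤ ⨆ v : ℝ≥0, (𝓕 v : MeasurableSpace Ω) :=
    le_iSup (fun v : ℝ≥0 => (𝓕 v : MeasurableSpace Ω)) u
  have hAm : MeasurableSet[m] A := hFinf _ hA
  have hFm : MeasurableSet[m] F := 𝓕.le u _ hF
  set B : Set Ω := (fun ω => min (ρ ω) ((u : ℝ≥0) : ℝ≥0∞)) ⁻¹' (Set.Iic c) with hB
  have hBm : MeasurableSet[m] B := (hρ.min measurable_const) measurableSet_Iic
  by_cases hcu : ((u : ℝ≥0) : ℝ≥0∞) ≤ c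
  · -- B = univ
    have hBuniv : B = Set.univ := by
      ext ω; simp only [hB, Set.mem_preimage, Set.mem_Iic, Set.mem_univ, iff_true]
      exact le_trans (min_le_right _ _) hcu
    rw [hBuniv, Set.inter_univ]
    rw [setIntegral_condExp (𝓕.le u) (ind_integrable hAm) hF, setIntegral_ind hAm]
  · -- B = {ρ ≤ s}
    have hcu' : c < ((u : ℝ≥0) : ℝ≥0∞) := lt_of_not_ge hcu
    set s : ℝ≥0 := c.toNNReal with hs
    have hcs : ((s : ℝ≥0) : ℝ≥0∞) = c := ENNReal.coe_toNNReal (hcu'.trans_le le_top).ne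
    have hsu : s ≤ u := by
      rw [← ENNReal.coe_le_coe, hcs]; exact hcu'.le
    have hBset : B = {ω | ρ ω ≤ ((s : ℝ≥0) : ℝ≥0∞)} := by
      ext ω
      simp only [hB, Set.mem_preimage, Set.mem_Iic, Set.mem_setOf_eq, min_le_iff, hcs]
      exact or_iff_left (not_le.mpr hcu')
    have hCs : μ[ind B|𝓕 u] =ᵐ[μ] μ[ind B|⨆ v : ℝ≥0, (𝓕 v : MeasurableSpace Ω)] := by
      rw [hBset]; exact hC s u hsu
    -- notation
    set K := μ[ind A|𝓕 u] with hK
    set L := μ[ind B|𝓕 u] with hL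
    set L' := μ[ind B|⨆ v : ℝ≥0, (𝓕 v : MeasurableSpace Ω)] with hL'
    have hKb : ∀ᵐ x ∂μ, ‖K x‖ ≤ 1 := norm_condexp_ind_le_one A hAm
    have hLb : ∀ᵐ x ∂μ, ‖L x‖ ≤ 1 := norm_condexp_ind_le_one B hBm
    -- LHS chain
    have e0 : ∫ x in (F ∩ B), K x ∂μ = ∫ x, (ind F x * K x) * ind B x ∂μ := by
      rw [setIntegral_eq_ind_mul (hFm.inter hBm) K]
      refine integral_congr_ae (Eventually.of_forall fun x => ?_)
      simp only [ind_inter]; ring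
    have e1 : ∫ x, (ind F x * K x) * ind B x ∂μ = ∫ x, (ind F x * K x) * L x ∂μ := by
      refine integral_mul_condexp_right (c := (1:ℝ)) (𝓕.le u)
        ((ind_stronglyMeasurable hF).mul stronglyMeasurable_condExp) ?_ (ind_integrable hBm)
      filter_upwards [hKb] with x hx
      calc ‖ind F x * K x‖ = ‖ind F x‖ * ‖K x‖ := norm_mul _ _
        _ ≤ 1 * 1 := mul_le_mul (ind_norm_le F x) hx (norm_nonneg _) zero_le_one
        _ = 1 := one_mul 1
    -- RHS chain
    have f0 : (μ (A ∩ (F ∩ B))).toReal = ∫ x, (ind A x * ind F x) * ind B x ∂μ := by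
      rw [← integral_ind (A ∩ (F ∩ B)) (hAm.inter (hFm.inter hBm))]
      refine integral_congr_ae (Eventually.of_forall fun x => ?_)
      simp only [ind_inter]; ring
    have f1 : ∫ x, (ind A x * ind F x) * ind B x ∂μ
        = ∫ x, (ind A x * ind F x) * L' x ∂μ := by
      refine integral_mul_condexp_right (c := (1:ℝ)) hFinf
        ((ind_stronglyMeasurable hA).mul (ind_stronglyMeasurable (hle _ hF))) ?_
        (ind_integrable hBm)
      refine Eventually.of_forall fun x => ?_
      calc ‖ind A x * ind F x‖ = ‖ind A x‖ * ‖ind F x‖ := norm_mul _ _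
        _ ≤ 1 * 1 := mul_le_mul (ind_norm_le A x) (ind_norm_le F x) (norm_nonneg _) zero_le_one
        _ = 1 := one_mul 1
    have f2 : ∫ x, (ind A x * ind F x) * L' x ∂μ
        = ∫ x, (ind A x * ind F x) * L x ∂μ := by
      refine integral_congr_ae ?_
      filter_upwards [hCs] with x hx
      rw [hx]
    have f3 : ∫ x, (ind A x * ind F x) * L x ∂μ
        = ∫ x, (ind F x * L x) * ind A x ∂μ := by
      refine integral_congr_ae (Eventually.of_forall fun x => ?_); ring
    have f4 : ∫ x, (ind F x * L x) * ind A x ∂μ = ∫ x, (ind F x * L x) * K x ∂μ := by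
      refine integral_mul_condexp_right (c := (1:ℝ)) (𝓕.le u)
        ((ind_stronglyMeasurable hF).mul stronglyMeasurable_condExp) ?_ (ind_integrable hAm)
      filter_upwards [hLb] with x hx
      calc ‖ind F x * L x‖ = ‖ind F x‖ * ‖L x‖ := norm_mul _ _
        _ ≤ 1 * 1 := mul_le_mul (ind_norm_le F x) hx (norm_nonneg _) zero_le_one
        _ = 1 := one_mul 1
    have f5 : ∫ x, (ind F x * L x) * K x ∂μ = ∫ x, (ind F x * K x) * L x ∂μ := by
      refine integral_congr_ae (Eventually.of_forall fun x => ?_); ring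
    rw [e0, e1, f0, f1, f2, f3, f4, f5]


lemma condexp_ind_sup_eq (𝓕 : Filtration ℝ≥0 m) (ρ : Ω → ℝ≥0∞) (hρ : Measurable ρ)
    (hC : ∀ s t : ℝ≥0, s ≤ t →
      μ[ind {ω | ρ ω ≤ (s : ℝ≥0∞)}|𝓕 t] =ᵐ[μ]
      μ[ind {ω | ρ ω ≤ (s : ℝ≥0∞)}|⨆ v : ℝ≥0, (𝓕 v : MeasurableSpace Ω)])
    (u : ℝ≥0) {G : Set Ω}
    (hG : MeasurableSet[(𝓕 u : MeasurableSpace Ω) ⊔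
      MeasurableSpace.comap (fun ω => min (ρ ω) ((u : ℝ≥0) : ℝ≥0∞)) inferInstance] G) :
    μ[ind G|𝓕 u] =ᵐ[μ] μ[ind G|⨆ v : ℝ≥0, (𝓕 v : MeasurableSpace Ω)] := by
  have hFinf : (⨆ v : ℝ≥0, (𝓕 v : MeasurableSpace Ω)) ≤ m := iSup_le fun v => 𝓕.le v
  have hle : (𝓕 u : MeasurableSpace Ω) ≤ ⨆ v : ℝ≥0, (𝓕 v : MeasurableSpace Ω) :=
    le_iSup (fun v : ℝ≥0 => (𝓕 v : MeasurableSpace Ω)) u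
  have hsupm : ((𝓕 u : MeasurableSpace Ω) ⊔
      MeasurableSpace.comap (fun ω => min (ρ ω) ((u : ℝ≥0) : ℝ≥0∞)) inferInstance) ≤ m :=
    sup_le (𝓕.le u) (MeasurableSpace.comap_le_iff_le_map.mpr
      ((hρ.min measurable_const).le_map))
  have hGm : MeasurableSet[m] G := hsupm _ hG
  have key : ∀ A : Set Ω, MeasurableSet[⨆ v : ℝ≥0, (𝓕 v : MeasurableSpace Ω)] A →
      ∫ x in A, (μ[ind G|𝓕 u]) x ∂μ = (μ (G ∩ A)).toReal := by
    intro A hA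
    have hAm : MeasurableSet[m] A := hFinf _ hA
    have flip := setIntegral_condexp_ind_symm (μ := μ) (𝓕.le u) hGm hAm
    have hext := setIntegral_eq_of_generateFrom hsupm (generateFrom_recC 𝓕 ρ u)
      (isPiSystem_recC 𝓕 ρ u) hAm (Y := μ[ind A|𝓕 u]) integrable_condExp
      (condExp_nonneg (Eventually.of_forall (ind_nonneg A)))
      (by rw [integral_condExp (𝓕.le u), integral_ind A hAm])
      (by rintro S ⟨F, hF, c, rfl⟩; exact condC_rect 𝓕 ρ hρ hC u hA hF c) G hG
    rw [flip, hext, Set.inter_comm]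
  have := ae_eq_condexp_ind hFinf hGm (Y := μ[ind G|𝓕 u]) integrable_condExp
    ⟨μ[ind G|𝓕 u], stronglyMeasurable_condExp.mono hle, EventuallyEq.rfl⟩ key
  exact this

lemma exists_nat_inv_le {δ : ℝ≥0} (hδ : 0 < δ) : ∃ n : ℕ, ((n : ℝ≥0) + 1)⁻¹ ≤ δ := by
  obtain ⟨n, hn⟩ := exists_nat_gt (δ⁻¹ : ℝ≥0)
  refine ⟨n, ?_⟩
  have hδR : (0 : ℝ) < (δ : ℝ) := hδ
  have hn' : ((δ : ℝ))⁻¹ < (n : ℝ) + 1 := by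
    have : ((δ⁻¹ : ℝ≥0) : ℝ) < (n : ℝ) := by exact_mod_cast hn
    rw [NNReal.coe_inv] at this
    linarith
  have h1 : (1 : ℝ) < (δ : ℝ) * ((n : ℝ) + 1) := by
    calc (1 : ℝ) = (δ : ℝ) * (δ : ℝ)⁻¹ := (mul_inv_cancel₀ hδR.ne').symm
      _ < (δ : ℝ) * ((n : ℝ) + 1) := by
          exact mul_lt_mul_of_pos_left hn' hδR
  have h2 : ((n : ℝ) + 1)⁻¹ < (δ : ℝ) := by
    rw [← one_div]
    rw [div_lt_iff₀ (by positivity : (0:ℝ) < (n : ℝ) + 1)]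
    linarith
  have : (((n : ℝ≥0) + 1)⁻¹ : ℝ) ≤ (δ : ℝ) := by
    push_cast
    exact h2.le
  exact_mod_cast this

lemma condexp_ind_prog_eq (𝓕 : Filtration ℝ≥0 m)
    (hcomp : ∀ s : Set Ω, μ s = 0 → MeasurableSet[𝓕 0] s)
    (hrc : ∀ t : ℝ≥0, (𝓕 t : MeasurableSpace Ω)
      = ⨅ (v : ℝ≥0) (_ : t < v), (𝓕 v : MeasurableSpace Ω))
    (ρ : Ω → ℝ≥0∞) (hρ : Measurable ρ)
    (hC : ∀ s t : ℝ≥0, s ≤ t →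
      μ[ind {ω | ρ ω ≤ (s : ℝ≥0∞)}|𝓕 t] =ᵐ[μ]
      μ[ind {ω | ρ ω ≤ (s : ℝ≥0∞)}|⨆ v : ℝ≥0, (𝓕 v : MeasurableSpace Ω)])
    (𝓖 : Filtration ℝ≥0 m)
    (h𝓖 : ∀ t : ℝ≥0, (𝓖 t : MeasurableSpace Ω) =
      ⨅ (ε : ℝ≥0) (_ : 0 < ε),
        ((𝓕 (t + ε) : MeasurableSpace Ω) ⊔
          MeasurableSpace.comap (fun ω => min (ρ ω) ((t + ε : ℝ≥0) : ℝ≥0∞)) inferInstance))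
    (t : ℝ≥0) {G : Set Ω} (hG : MeasurableSet[𝓖 t] G) :
    μ[ind G|⨆ v : ℝ≥0, (𝓕 v : MeasurableSpace Ω)] =ᵐ[μ] μ[ind G|𝓕 t] := by
  have hGm : MeasurableSet[m] G := 𝓖.le t _ hG
  have hGH : ∀ ε : ℝ≥0, 0 < ε →
      MeasurableSet[(𝓕 (t + ε) : MeasurableSpace Ω) ⊔
        MeasurableSpace.comap (fun ω => min (ρ ω) ((t + ε : ℝ≥0) : ℝ≥0∞)) inferInstance] G := by
    intro ε hε
    have h1 : (𝓖 t : MeasurableSpace Ω) ≤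
        ((𝓕 (t + ε) : MeasurableSpace Ω) ⊔
          MeasurableSpace.comap (fun ω => min (ρ ω) ((t + ε : ℝ≥0) : ℝ≥0∞)) inferInstance) := by
      rw [h𝓖 t]
      exact iInf_le_of_le ε (iInf_le _ hε)
    exact h1 _ hG
  have hLem : ∀ ε : ℝ≥0, 0 < ε →
      μ[ind G|𝓕 (t + ε)] =ᵐ[μ] μ[ind G|⨆ v : ℝ≥0, (𝓕 v : MeasurableSpace Ω)] :=
    fun ε hε => condexp_ind_sup_eq 𝓕 ρ hρ hC (t + ε) (hGH ε hε)
  set Z := μ[ind G|𝓕 (t + 1)] with hZdef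
  have hpos : ∀ n : ℕ, (0 : ℝ≥0) < ((n : ℝ≥0) + 1)⁻¹ := fun n => by positivity
  have hZ : ∀ n : ℕ, Z =ᵐ[μ] μ[ind G|𝓕 (t + ((n : ℝ≥0) + 1)⁻¹)] :=
    fun n => (hLem 1 one_pos).trans (hLem _ (hpos n)).symm
  set N : Set Ω := ⋃ n : ℕ, {x | Z x ≠ (μ[ind G|𝓕 (t + ((n : ℝ≥0) + 1)⁻¹)]) x} with hNdef
  have hNnull : μ N = 0 := by
    refine measure_iUnion_null fun n => ?_
    exact ae_iff.mp (hZ n)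
  have hN0 : MeasurableSet[𝓕 0] N := hcomp N hNnull
  set g : Ω → ℝ := (Nᶜ).indicator Z with hgdef
  have hg_eq : ∀ n : ℕ, g = (Nᶜ).indicator (μ[ind G|𝓕 (t + ((n : ℝ≥0) + 1)⁻¹)]) := by
    intro n
    funext x
    by_cases hx : x ∈ N
    · have hx' : x ∉ Nᶜ := fun h => h hx
      rw [hgdef]
      rw [Set.indicator_of_notMem hx', Set.indicator_of_notMem hx']
    · have hx2 : Z x = (μ[ind G|𝓕 (t + ((n : ℝ≥0) + 1)⁻¹)]) x := by
        by_contra hne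
        exact hx (Set.mem_iUnion.mpr ⟨n, hne⟩)
      rw [hgdef, Set.indicator_of_mem (Set.mem_compl hx), Set.indicator_of_mem
        (Set.mem_compl hx), hx2]
  have hg_meas_n : ∀ n : ℕ, StronglyMeasurable[𝓕 (t + ((n : ℝ≥0) + 1)⁻¹)] g := by
    intro n
    rw [hg_eq n]
    exact stronglyMeasurable_condExp.indicator ((𝓕.mono zero_le _ hN0).compl)
  have hg_meas : StronglyMeasurable[𝓕 t] g := by
    have hmeas : Measurable[𝓕 t] g := by
      intro s hs
      rw [hrc t]
      refine MeasurableSpace.measurableSet_iInf.mpr fun v => ?_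
      refine MeasurableSpace.measurableSet_iInf.mpr fun hv => ?_
      obtain ⟨n, hn⟩ := exists_nat_inv_le (tsub_pos_of_lt hv)
      have hnv : t + ((n : ℝ≥0) + 1)⁻¹ ≤ v := by
        calc t + ((n : ℝ≥0) + 1)⁻¹ ≤ t + (v - t) := by gcongr
          _ = v := add_tsub_cancel_of_le hv.le
      exact 𝓕.mono hnv _ ((hg_meas_n n).measurable hs)
    exact hmeas.stronglyMeasurable
  have haem : ∀ᵐ x ∂μ, x ∉ N := by
    rw [ae_iff]
    simpa using hNnull
  have hasm : AEStronglyMeasurable[𝓕 t] Z μ := by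
    refine ⟨g, hg_meas, ?_⟩
    filter_upwards [haem] with x hx
    rw [hgdef, Set.indicator_of_mem (Set.mem_compl hx)]
  have hZcond : Z =ᵐ[μ] μ[ind G|𝓕 t] := by
    refine ae_eq_condexp_ind (𝓕.le t) hGm integrable_condExp hasm ?_
    intro A hA
    have hA' : MeasurableSet[𝓕 (t + 1)] A := 𝓕.mono le_self_add _ hA
    rw [hZdef, setIntegral_condExp (𝓕.le (t + 1)) (ind_integrable hGm) hA',
      setIntegral_ind hGm]
  exact (hLem 1 one_pos).symm.trans hZcond

lemma generateFrom_iSup (𝓕 : Filtration ℝ≥0 m) :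
    (⨆ v : ℝ≥0, (𝓕 v : MeasurableSpace Ω))
      = MeasurableSpace.generateFrom {A : Set Ω | ∃ v : ℝ≥0, MeasurableSet[𝓕 v] A} := by
  apply le_antisymm
  · refine iSup_le fun v => ?_
    intro A hA
    exact MeasurableSpace.measurableSet_generateFrom ⟨v, hA⟩
  · refine MeasurableSpace.generateFrom_le ?_
    rintro A ⟨v, hv⟩
    exact MeasurableSpace.le_def.mp
      (le_iSup (fun w : ℝ≥0 => (𝓕 w : MeasurableSpace Ω)) v) A hv

lemma isPiSystem_iSup (𝓕 : Filtration ℝ≥0 m) :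
    IsPiSystem {A : Set Ω | ∃ v : ℝ≥0, MeasurableSet[𝓕 v] A} := by
  rintro A ⟨v, hv⟩ B ⟨w, hw⟩ -
  exact ⟨max v w, (𝓕.mono (le_max_left v w) _ hv).inter (𝓕.mono (le_max_right v w) _ hw)⟩

/-- Forward direction: hypothesis (H) implies the conditional-law identity. -/
lemma forward_dir (𝓕 : Filtration ℝ≥0 m) (ρ : Ω → ℝ≥0∞) (hρ : Measurable ρ)
    (𝓖 : Filtration ℝ≥0 m)
    (h𝓖 : ∀ t : ℝ≥0, (𝓖 t : MeasurableSpace Ω) =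
      ⨅ (ε : ℝ≥0) (_ : 0 < ε),
        ((𝓕 (t + ε) : MeasurableSpace Ω) ⊔
          MeasurableSpace.comap (fun ω => min (ρ ω) ((t + ε : ℝ≥0) : ℝ≥0∞)) inferInstance))
    (hH : ∀ M : ℝ≥0 → Ω → ℝ, Martingale M 𝓕 μ → Martingale M 𝓖 μ)
    (s t : ℝ≥0) (hst : s ≤ t) :
    μ[ind {ω | ρ ω ≤ (s : ℝ≥0∞)}|𝓕 t] =ᵐ[μ]
      μ[ind {ω | ρ ω ≤ (s : ℝ≥0∞)}|⨆ v : ℝ≥0, (𝓕 v : MeasurableSpace Ω)] := by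
  have hFinf : (⨆ v : ℝ≥0, (𝓕 v : MeasurableSpace Ω)) ≤ m := iSup_le fun v => 𝓕.le v
  set G : Set Ω := {ω | ρ ω ≤ (s : ℝ≥0∞)} with hGdef
  have hGm : MeasurableSet[m] G := hρ measurableSet_Iic
  have hG𝓖 : MeasurableSet[𝓖 t] G := by
    rw [h𝓖 t]
    refine MeasurableSpace.measurableSet_iInf.mpr fun ε => ?_
    refine MeasurableSpace.measurableSet_iInf.mpr fun hε => ?_
    refine MeasurableSpace.le_def.mp le_sup_right _ ?_
    refine ⟨Set.Iic ((s : ℝ≥0) : ℝ≥0∞), measurableSet_Iic, ?_⟩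
    ext ω
    have hlt : ((s : ℝ≥0) : ℝ≥0∞) < ((t + ε : ℝ≥0) : ℝ≥0∞) :=
      ENNReal.coe_lt_coe.mpr (lt_of_le_of_lt hst (lt_add_of_pos_right t hε))
    simp only [Set.mem_preimage, Set.mem_Iic, hGdef, Set.mem_setOf_eq, min_le_iff]
    exact or_iff_left (not_le.mpr hlt)
  have key1 : ∀ A : Set Ω, (∃ v : ℝ≥0, MeasurableSet[𝓕 v] A) →
      ∫ x in A, (μ[ind G|𝓕 t]) x ∂μ = (μ (G ∩ A)).toReal := by
    rintro A ⟨v, hv⟩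
    set u : ℝ≥0 := max v t with hu
    have hAu : MeasurableSet[𝓕 u] A := 𝓕.mono (le_max_left v t) _ hv
    have hAm : MeasurableSet[m] A := 𝓕.le u _ hAu
    have hmart : Martingale (fun w => μ[ind A|𝓕 w]) 𝓕 μ := martingale_condExp (ind A) 𝓕 μ
    have h𝓖mart : Martingale (fun w => μ[ind A|𝓕 w]) 𝓖 μ := hH _ hmart
    have hcond : μ[(μ[ind A|𝓕 u])|𝓖 t] =ᵐ[μ] μ[ind A|𝓕 t] :=
      h𝓖mart.condExp_ae_eq (le_max_right v t)
    have heqcond : μ[ind A|𝓕 u] = ind A :=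
      condExp_of_stronglyMeasurable (𝓕.le u) (ind_stronglyMeasurable hAu) (ind_integrable hAm)
    have hcondG : μ[ind A|𝓖 t] =ᵐ[μ] μ[ind A|𝓕 t] := by
      refine EventuallyEq.trans ?_ hcond
      rw [heqcond]
    calc ∫ x in A, (μ[ind G|𝓕 t]) x ∂μ
        = ∫ x in G, (μ[ind A|𝓕 t]) x ∂μ :=
          setIntegral_condexp_ind_symm (μ := μ) (𝓕.le t) hGm hAm
      _ = ∫ x in G, (μ[ind A|𝓖 t]) x ∂μ := by
          refine setIntegral_congr_ae hGm ?_
          filter_upwards [hcondG] with x hx _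
          rw [hx]
      _ = ∫ x in G, ind A x ∂μ := setIntegral_condExp (𝓖.le t) (ind_integrable hAm) hG𝓖
      _ = (μ (A ∩ G)).toReal := setIntegral_ind hAm
      _ = (μ (G ∩ A)).toReal := by rw [Set.inter_comm]
  have key2 := setIntegral_eq_of_generateFrom hFinf (generateFrom_iSup 𝓕)
    (isPiSystem_iSup 𝓕) hGm (Y := μ[ind G|𝓕 t]) integrable_condExp
    (condExp_nonneg (Eventually.of_forall (ind_nonneg G)))
    (by rw [integral_condExp (𝓕.le t), integral_ind G hGm]) key1
  exact ae_eq_condexp_ind hFinf hGm integrable_condExp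
    ⟨μ[ind G|𝓕 t],
      stronglyMeasurable_condExp.mono (le_iSup (fun v : ℝ≥0 => (𝓕 v : MeasurableSpace Ω)) t),
      EventuallyEq.rfl⟩ key2

/-- Backward direction: the conditional-law identity implies (H). -/
lemma backward_dir (𝓕 : Filtration ℝ≥0 m)
    (hcomp : ∀ s : Set Ω, μ s = 0 → MeasurableSet[𝓕 0] s)
    (hrc : ∀ t : ℝ≥0, (𝓕 t : MeasurableSpace Ω)
      = ⨅ (v : ℝ≥0) (_ : t < v), (𝓕 v : MeasurableSpace Ω))
    (ρ : Ω → ℝ≥0∞) (hρ : Measurable ρ)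
    (hC : ∀ s t : ℝ≥0, s ≤ t →
      μ[ind {ω | ρ ω ≤ (s : ℝ≥0∞)}|𝓕 t] =ᵐ[μ]
      μ[ind {ω | ρ ω ≤ (s : ℝ≥0∞)}|⨆ v : ℝ≥0, (𝓕 v : MeasurableSpace Ω)])
    (𝓖 : Filtration ℝ≥0 m)
    (h𝓖 : ∀ t : ℝ≥0, (𝓖 t : MeasurableSpace Ω) =
      ⨅ (ε : ℝ≥0) (_ : 0 < ε),
        ((𝓕 (t + ε) : MeasurableSpace Ω) ⊔
          MeasurableSpace.comap (fun ω => min (ρ ω) ((t + ε : ℝ≥0) : ℝ≥0∞)) inferInstance))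
    {M : ℝ≥0 → Ω → ℝ} (hM : Martingale M 𝓕 μ) : Martingale M 𝓖 μ := by
  have hFinf : (⨆ v : ℝ≥0, (𝓕 v : MeasurableSpace Ω)) ≤ m := iSup_le fun v => 𝓕.le v
  have le𝓖 : ∀ w : ℝ≥0, (𝓕 w : MeasurableSpace Ω) ≤ 𝓖 w := by
    intro w
    rw [h𝓖 w]
    refine le_iInf fun ε => le_iInf fun hε => ?_
    exact le_trans (𝓕.mono le_self_add) le_sup_left
  constructor
  · exact fun w => (hM.stronglyAdapted w).mono (le𝓖 w)
  · intro i j hij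
    refine (ae_eq_condExp_of_forall_setIntegral_eq (μ := μ) (m := (𝓖 i : MeasurableSpace Ω))
      (m₀ := m) (𝓖.le i) (hM.integrable j)
      (fun s _ _ => integrableOn_of_integrable (hM.integrable i) s)
      (fun s hs _ => ?_) ((hM.stronglyAdapted i).mono (le𝓖 i)).aestronglyMeasurable).symm
    -- goal : ∫ x in s, M i x ∂μ = ∫ x in s, M j x ∂μ
    have hsm : MeasurableSet[m] s := 𝓖.le i _ hs
    have h2 := condexp_ind_prog_eq 𝓕 hcomp hrc ρ hρ hC 𝓖 h𝓖 i hs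
    have hMjtop : StronglyMeasurable[⨆ v : ℝ≥0, (𝓕 v : MeasurableSpace Ω)] (M j) :=
      (hM.stronglyAdapted j).mono (le_iSup (fun v : ℝ≥0 => (𝓕 v : MeasurableSpace Ω)) j)
    have c1 : ∫ x in s, M j x ∂μ = ∫ x, ind s x * M j x ∂μ :=
      setIntegral_eq_ind_mul hsm (M j)
    have c2 : ∫ x, ind s x * M j x ∂μ
        = ∫ x, (μ[ind s|⨆ v : ℝ≥0, (𝓕 v : MeasurableSpace Ω)]) x * M j x ∂μ :=
      integral_mul_condexp_left (c := (1:ℝ)) hFinf (ind_integrable hsm)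
        (Eventually.of_forall (ind_norm_le s)) hMjtop (hM.integrable j)
    have c3 : ∫ x, (μ[ind s|⨆ v : ℝ≥0, (𝓕 v : MeasurableSpace Ω)]) x * M j x ∂μ
        = ∫ x, (μ[ind s|𝓕 i]) x * M j x ∂μ := by
      refine integral_congr_ae ?_
      filter_upwards [h2] with x hx
      rw [hx]
    have c4 : ∫ x, (μ[ind s|𝓕 i]) x * M j x ∂μ
        = ∫ x, (μ[ind s|𝓕 i]) x * (μ[M j|𝓕 i]) x ∂μ :=
      integral_mul_condexp_right (c := (1:ℝ)) (𝓕.le i) stronglyMeasurable_condExp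
        (norm_condexp_ind_le_one s hsm) (hM.integrable j)
    have c5 : ∫ x, (μ[ind s|𝓕 i]) x * (μ[M j|𝓕 i]) x ∂μ
        = ∫ x, (μ[ind s|𝓕 i]) x * M i x ∂μ := by
      refine integral_congr_ae ?_
      filter_upwards [hM.condExp_ae_eq hij] with x hx
      rw [hx]
    have c6 : ∫ x, ind s x * M i x ∂μ = ∫ x, (μ[ind s|𝓕 i]) x * M i x ∂μ :=
      integral_mul_condexp_left (c := (1:ℝ)) (𝓕.le i) (ind_integrable hsm)
        (Eventually.of_forall (ind_norm_le s)) (hM.stronglyAdapted i) (hM.integrable i)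
    have c7 : ∫ x in s, M i x ∂μ = ∫ x, ind s x * M i x ∂μ :=
      setIntegral_eq_ind_mul hsm (M i)
    rw [c7, c6, ← c5, ← c4, ← c3, ← c2, ← c1]

end EnlargementAux


namespace Enlargement

variable {Ω : Type*} {m : MeasurableSpace Ω}

/-- **(H) for progressive enlargements via the conditional law of `ρ`.** Every
`𝓕`-martingale is an `𝓕^ρ`-martingale iff for all `s ≤ t`,
`P(ρ ≤ s | 𝓕 t) = P(ρ ≤ s | 𝓕_∞)` a.s. -/
theorem H_progressive_iff_cond_law {μ : Measure Ω} [IsProbabilityMeasure μ]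
    (𝓕 : Filtration ℝ≥0 m) (h𝓕 : UsualConditions 𝓕 μ)
    (ρ : Ω → ℝ≥0∞) (hρ : Measurable ρ)
    (𝓖 : Filtration ℝ≥0 m) (h𝓖 : ProgEnlargement 𝓕 ρ 𝓖) :
    (∀ M : ℝ≥0 → Ω → ℝ, Martingale M 𝓕 μ → Martingale M 𝓖 μ) ↔
      (∀ s t : ℝ≥0, s ≤ t →
        μ[Set.indicator {ω | ρ ω ≤ (s : ℝ≥0∞)} (fun _ => (1 : ℝ)) | 𝓕 t] =ᵐ[μ]
        μ[Set.indicator {ω | ρ ω ≤ (s : ℝ≥0∞)} (fun _ => (1 : ℝ)) |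
            (⨆ u : ℝ≥0, (𝓕 u : MeasurableSpace Ω))]) := by
  constructor
  · intro hH s t hst
    exact EnlargementAux.forward_dir 𝓕 ρ hρ 𝓖 h𝓖 hH s t hst
  · intro hC M hM
    exact EnlargementAux.backward_dir 𝓕 h𝓕.1 h𝓕.2 ρ hρ hC 𝓖 h𝓖 hM

end Enlargement
end
end

section
/- Criterion for (H) under an equivalent measure: Let (Ω,F,P) be a probability space with filtrations (F_t) ⊆ (G_t) satisfying the usual assumptions, and suppose every (F_t,P)-martingale is a (G_t,P)-martingale (the (H) hypothesis holds under P). Let Q ~ P with density Y = dQ/dP, and set R_t = E_P[Y | F_t] and R'_t = E_P[Y | G_t]. Then the (H) hypothesis holds under Q (every (F_t,Q)-martingale is a (G_t,Q)-martingale) if and only if for every t ≥ 0 and every nonnegative F_∞-measurable random variable X one has E_P[XY | G_t]/R'_t = E_P[XY | F_t]/R_t almost surely. -/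
open MeasureTheory Filter Set ProbabilityTheory
open scoped NNReal ENNReal

noncomputable section

namespace Enlargement

variable {Ω : Type*} {m : MeasurableSpace Ω}

section AuxLemmas
variable {Ω : Type*}

lemma setIntegral_withDensity' {m : MeasurableSpace Ω} {μ ν : Measure Ω} {Y : Ω → ℝ}
    (hYmeas : Measurable Y) (hYpos : ∀ᵐ ω ∂μ, 0 < Y ω)
    (hν : ν = μ.withDensity (fun ω => ENNReal.ofReal (Y ω)))
    {s : Set Ω} (hs : MeasurableSet s) (g : Ω → ℝ) :
    ∫ ω in s, g ω ∂ν = ∫ ω in s, g ω * Y ω ∂μ := by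
  have h1 : ν = μ.withDensity (fun ω => ((Y ω).toNNReal : ℝ≥0∞)) := hν
  rw [h1, restrict_withDensity hs,
    integral_withDensity_eq_integral_smul hYmeas.real_toNNReal]
  refine integral_congr_ae ?_
  filter_upwards [ae_restrict_of_ae hYpos] with ω hω
  simp [NNReal.smul_def, Real.coe_toNNReal _ hω.le, mul_comm]

lemma integrable_withDensity'_iff {m : MeasurableSpace Ω} {μ ν : Measure Ω} {Y : Ω → ℝ}
    (hYmeas : Measurable Y) (hYpos : ∀ᵐ ω ∂μ, 0 < Y ω)
    (hν : ν = μ.withDensity (fun ω => ENNReal.ofReal (Y ω))) (g : Ω → ℝ) :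
    Integrable g ν ↔ Integrable (fun ω => g ω * Y ω) μ := by
  have h1 : ν = μ.withDensity (fun ω => ((Y ω).toNNReal : ℝ≥0∞)) := hν
  rw [h1, integrable_withDensity_iff_integrable_smul hYmeas.real_toNNReal]
  refine integrable_congr ?_
  filter_upwards [hYpos] with ω hω
  simp [NNReal.smul_def, Real.coe_toNNReal _ hω.le, mul_comm]

lemma condexp_pos_of_pos {m' m : MeasurableSpace Ω} {μ : Measure Ω} [IsFiniteMeasure μ]
    (hm : m' ≤ m)
    {Y : Ω → ℝ} (hYpos : ∀ᵐ ω ∂μ, 0 < Y ω)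
    (hYint : Integrable Y μ) :
    ∀ᵐ ω ∂μ, 0 < (μ[Y|m']) ω := by
  set R := μ[Y|m'] with hR
  have hRmeas : StronglyMeasurable[m'] R := stronglyMeasurable_condExp
  set S : Set Ω := {ω | R ω ≤ 0} with hS
  have hSm' : MeasurableSet[m'] S := hRmeas.measurable measurableSet_Iic
  have hSm : MeasurableSet[m] S := hm _ hSm'
  have h1 : ∫ ω in S, Y ω ∂μ = ∫ ω in S, R ω ∂μ :=
    (setIntegral_condExp hm hYint hSm').symm
  have h2 : ∫ ω in S, R ω ∂μ ≤ 0 := setIntegral_nonpos hSm fun ω hω => hω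
  have h3 : 0 ≤ᵐ[μ.restrict S] Y := by
    filter_upwards [ae_restrict_of_ae hYpos] with ω hω using hω.le
  have h4 : ∫ ω in S, Y ω ∂μ = 0 := le_antisymm (h1 ▸ h2) (integral_nonneg_of_ae h3)
  have h5 : Y =ᵐ[μ.restrict S] 0 :=
    (setIntegral_eq_zero_iff_of_nonneg_ae h3 hYint.integrableOn).mp h4
  have h6 : μ S = 0 := by
    have hz : μ.restrict S {ω | Y ω ≠ 0} = 0 := h5
    have hz2 : μ {ω | ¬ 0 < Y ω} = 0 := by
      rw [← ae_iff] ; exact hYpos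
    simp only [not_lt] at hz2
    have key : μ S ≤ μ.restrict S {ω | Y ω ≠ 0} + μ {ω | ¬ 0 < Y ω} := by
      rw [← Measure.restrict_apply_univ (μ := μ) (s := S)]
      calc μ.restrict S univ ≤ μ.restrict S ({ω | Y ω ≠ 0} ∪ {ω | ¬ 0 < Y ω}) := by
            refine measure_mono fun ω _ => ?_
            by_cases h : Y ω = 0
            · exact Or.inr (by simp [h])
            · exact Or.inl h
        _ ≤ μ.restrict S {ω | Y ω ≠ 0} + μ.restrict S {ω | ¬ 0 < Y ω} := measure_union_le _ _
        _ ≤ _ := add_le_add le_rfl (Measure.restrict_le_self _)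
    simpa [hz, hz2] using key
  have : ∀ᵐ ω ∂μ, ω ∉ S := by
    rw [ae_iff]; simpa using h6
  filter_upwards [this] with ω hω
  simpa [hS, not_le] using hω

/-- Bayes' rule for conditional expectation: `ν[f|m'] * μ[Y|m'] = μ[fY|m']` μ-a.e. -/
lemma bayes_mul {m' m : MeasurableSpace Ω} {μ ν : Measure Ω}
    [IsProbabilityMeasure μ] [IsProbabilityMeasure ν] (hm : m' ≤ m)
    {Y : Ω → ℝ} (hYmeas : Measurable Y) (hYpos : ∀ᵐ ω ∂μ, 0 < Y ω)
    (hν : ν = μ.withDensity (fun ω => ENNReal.ofReal (Y ω)))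
    {f : Ω → ℝ} (hf : Integrable f ν) :
    (fun ω => (ν[f|m']) ω * (μ[Y|m']) ω) =ᵐ[μ] μ[fun ω => f ω * Y ω|m'] := by
  have hYint : Integrable Y μ := by
    have := (integrable_withDensity'_iff hYmeas hYpos hν 1).mp (integrable_const 1)
    simpa using this
  set h := ν[f|m'] with hh
  have hhsm : StronglyMeasurable[m'] h := stronglyMeasurable_condExp
  have hh_int : Integrable h ν := integrable_condExp
  have hhY : Integrable (fun ω => h ω * Y ω) μ :=
    (integrable_withDensity'_iff hYmeas hYpos hν h).mp hh_int
  have hpull : μ[fun ω => h ω * Y ω|m'] =ᵐ[μ] fun ω => h ω * (μ[Y|m']) ω := by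
    have := condExp_mul_of_stronglyMeasurable_left hhsm (μ := μ) (g := Y) hhY hYint
    exact this
  have hfY : Integrable (fun ω => f ω * Y ω) μ :=
    (integrable_withDensity'_iff hYmeas hYpos hν f).mp hf
  refine ae_eq_condExp_of_forall_setIntegral_eq hm hfY ?_ ?_ ?_
  · intro s _ _
    exact (Integrable.congr integrable_condExp hpull).integrableOn
  · intro s hs _
    have hsm : MeasurableSet[m] s := hm _ hs
    calc ∫ ω in s, h ω * (μ[Y|m']) ω ∂μ
        = ∫ ω in s, (μ[fun ω => h ω * Y ω|m']) ω ∂μ :=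
          integral_congr_ae (ae_restrict_of_ae hpull.symm)
      _ = ∫ ω in s, h ω * Y ω ∂μ := setIntegral_condExp hm hhY hs
      _ = ∫ ω in s, h ω ∂ν := (setIntegral_withDensity' hYmeas hYpos hν hsm h).symm
      _ = ∫ ω in s, f ω ∂ν := setIntegral_condExp hm hf hs
      _ = ∫ ω in s, f ω * Y ω ∂μ := setIntegral_withDensity' hYmeas hYpos hν hsm f
  · exact (hhsm.mul stronglyMeasurable_condExp).aestronglyMeasurable

/-- Bayes' rule, quotient form. -/
lemma bayes_div {m' m : MeasurableSpace Ω} {μ ν : Measure Ω}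
    [IsProbabilityMeasure μ] [IsProbabilityMeasure ν] (hm : m' ≤ m)
    {Y : Ω → ℝ} (hYmeas : Measurable Y) (hYpos : ∀ᵐ ω ∂μ, 0 < Y ω)
    (hν : ν = μ.withDensity (fun ω => ENNReal.ofReal (Y ω)))
    {f : Ω → ℝ} (hf : Integrable f ν) :
    (fun ω => (μ[fun ω' => f ω' * Y ω'|m']) ω / (μ[Y|m']) ω) =ᵐ[μ] ν[f|m'] := by
  have hYint : Integrable Y μ := by
    have := (integrable_withDensity'_iff hYmeas hYpos hν 1).mp (integrable_const 1)
    simpa using this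
  have hRpos := condexp_pos_of_pos hm hYpos hYint
  filter_upwards [bayes_mul hm hYmeas hYpos hν hf, hRpos] with ω h1 h2
  rw [← h1, mul_div_cancel_right₀ _ (ne_of_gt h2)]

/-- integral over a set as integral against the indicator of that set. -/
lemma setIntegral_eq_integral_mul_ind {m : MeasurableSpace Ω} {ν : Measure Ω}
    {B : Set Ω} (hB : MeasurableSet B) (f : Ω → ℝ) :
    ∫ ω in B, f ω ∂ν = ∫ ω, f ω * B.indicator (fun _ => (1:ℝ)) ω ∂ν := by
  rw [← integral_indicator hB]
  refine integral_congr_ae (Eventually.of_forall fun ω => ?_)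
  by_cases h : ω ∈ B <;> simp [h]

/-- generalized self-adjointness step for condexp. -/
lemma integral_mul_condexp {m' m : MeasurableSpace Ω} {ν : Measure Ω}
    [IsProbabilityMeasure ν] (hm : m' ≤ m) {g f : Ω → ℝ}
    (hg : StronglyMeasurable[m'] g) (hf : Integrable f ν)
    (hgf : Integrable (fun ω => g ω * f ω) ν) :
    ∫ ω, g ω * f ω ∂ν = ∫ ω, g ω * (ν[f|m']) ω ∂ν := by
  have h1 : ν[fun ω => g ω * f ω|m'] =ᵐ[ν] fun ω => g ω * (ν[f|m']) ω :=
    condExp_mul_of_stronglyMeasurable_left hg hgf hf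
  rw [← integral_condExp hm (f := fun ω => g ω * f ω)]
  exact integral_congr_ae h1

/-- pull-out when the `m'`-measurable factor is a.e. bounded by 1. -/
lemma integral_mul_condexp_bdd {m' m : MeasurableSpace Ω} {ν : Measure Ω}
    [IsProbabilityMeasure ν] (hm : m' ≤ m) {g f : Ω → ℝ}
    (hg : StronglyMeasurable[m'] g) (hgb : ∀ᵐ ω ∂ν, |g ω| ≤ 1) (hf : Integrable f ν) :
    ∫ ω, g ω * f ω ∂ν = ∫ ω, g ω * (ν[f|m']) ω ∂ν := by
  have hb : ∀ᵐ ω ∂ν, ‖g ω‖ ≤ 1 := by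
    filter_upwards [hgb] with ω hω
    simpa [Real.norm_eq_abs] using hω
  exact integral_mul_condexp hm hg hf
    (hf.bdd_mul ((hg.mono hm).aestronglyMeasurable) hb)

/-- pull-out when the `m'`-measurable factor is integrable and the other a.e. bounded by 1. -/
lemma integral_mul_condexp_bdd' {m' m : MeasurableSpace Ω} {ν : Measure Ω}
    [IsProbabilityMeasure ν] (hm : m' ≤ m) {g f : Ω → ℝ}
    (hg : StronglyMeasurable[m'] g) (hgi : Integrable g ν)
    (hfm : AEStronglyMeasurable f ν) (hfb : ∀ᵐ ω ∂ν, |f ω| ≤ 1) :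
    ∫ ω, g ω * f ω ∂ν = ∫ ω, g ω * (ν[f|m']) ω ∂ν := by
  have hb : ∀ᵐ ω ∂ν, ‖f ω‖ ≤ 1 := by
    filter_upwards [hfb] with ω hω
    simpa [Real.norm_eq_abs] using hω
  have h2 : Integrable (fun ω => f ω * g ω) ν := hgi.bdd_mul hfm hb
  have h3 : Integrable f ν := by
    have : Integrable (fun ω => f ω * (1:Ω → ℝ) ω) ν :=
      (integrable_const (1:ℝ)).bdd_mul hfm hb
    simpa using this
  exact integral_mul_condexp hm hg h3
    (h2.congr (Eventually.of_forall fun ω => mul_comm _ _))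

/-- Step 1: under (H) for `ν`, conditional expectations of `𝓕 u`-measurable functions
on `𝓖 t` and `𝓕 t` agree. -/
lemma condexp_eq_of_H {m : MeasurableSpace Ω} {ν : Measure Ω} [IsProbabilityMeasure ν]
    {𝓕 𝓖 : Filtration ℝ≥0 m}
    (hH : ∀ M : ℝ≥0 → Ω → ℝ, Martingale M 𝓕 ν → Martingale M 𝓖 ν)
    (t u : ℝ≥0) {X : Ω → ℝ} (hX : StronglyMeasurable[𝓕 u] X) (hXi : Integrable X ν) :
    ν[X|𝓖 t] =ᵐ[ν] ν[X|𝓕 t] := by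
  have hX' : StronglyMeasurable[𝓕 (max u t)] X := hX.mono (𝓕.mono (le_max_left u t))
  have hM : Martingale (fun s => ν[X|𝓕 s]) 𝓕 ν := martingale_condExp X 𝓕 ν
  have hMG := hH _ hM
  have h1 : ν[ν[X|𝓕 (max u t)]|𝓖 t] =ᵐ[ν] ν[X|𝓕 t] := hMG.2 t (max u t) (le_max_right u t)
  have h2 : ν[X|𝓕 (max u t)] = X := condExp_of_stronglyMeasurable (𝓕.le _) hX' hXi
  rwa [h2] at h1

/-- Step 2: under (H) for `ν`, for `A ∈ 𝓖 t` the conditional expectation of `1_A` on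
`𝓕_∞` agrees with that on `𝓕 t`. -/
lemma condexp_indicator_iSup_eq_of_H {m : MeasurableSpace Ω} {ν : Measure Ω}
    [IsProbabilityMeasure ν] {𝓕 𝓖 : Filtration ℝ≥0 m}
    (hH : ∀ M : ℝ≥0 → Ω → ℝ, Martingale M 𝓕 ν → Martingale M 𝓖 ν)
    (t : ℝ≥0) {A : Set Ω} (hA : MeasurableSet[𝓖 t] A) :
    ν[A.indicator (fun _ => (1:ℝ))|⨆ s : ℝ≥0, (𝓕 s : MeasurableSpace Ω)]
      =ᵐ[ν] ν[A.indicator (fun _ => (1:ℝ))|𝓕 t] := by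
  have hmtop : (⨆ s : ℝ≥0, (𝓕 s : MeasurableSpace Ω)) ≤ m := iSup_le fun s => 𝓕.le s
  set a : Ω → ℝ := A.indicator (fun _ => (1:ℝ)) with ha
  have hAm : MeasurableSet[m] A := 𝓖.le t _ hA
  have ha_int : Integrable a ν := (integrable_const (1:ℝ)).indicator hAm
  have hab : ∀ᵐ ω ∂ν, |a ω| ≤ 1 := Eventually.of_forall fun ω => by
    by_cases h : ω ∈ A <;> simp [ha, h]
  refine (ae_eq_condExp_of_forall_setIntegral_eq hmtop ha_int
    (fun s _ _ => integrable_condExp.integrableOn) ?_ ?_).symm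
  swap
  · exact (stronglyMeasurable_condExp.mono
      (le_iSup (fun s : ℝ≥0 => (𝓕 s : MeasurableSpace Ω)) t)).aestronglyMeasurable
  have key : ∀ B : Set Ω, MeasurableSet[⨆ s : ℝ≥0, (𝓕 s : MeasurableSpace Ω)] B →
      ∫ ω in B, (ν[a|𝓕 t]) ω ∂ν = ∫ ω in B, a ω ∂ν := by
    have h_eq : (⨆ s : ℝ≥0, (𝓕 s : MeasurableSpace Ω)) =
        MeasurableSpace.generateFrom {s : Set Ω | ∃ u : ℝ≥0, MeasurableSet[𝓕 u] s} :=
      MeasurableSpace.measurableSpace_iSup_eq _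
    have h_pi : IsPiSystem {s : Set Ω | ∃ u : ℝ≥0, MeasurableSet[𝓕 u] s} := by
      rintro s ⟨u, hs⟩ s' ⟨v, hs'⟩ -
      exact ⟨max u v, ((𝓕.mono (le_max_left u v)) _ hs).inter
        ((𝓕.mono (le_max_right u v)) _ hs')⟩
    refine fun B hB => MeasurableSpace.induction_on_inter
      (C := fun B _ => ∫ ω in B, (ν[a|𝓕 t]) ω ∂ν = ∫ ω in B, a ω ∂ν)
      (m := ⨆ s : ℝ≥0, (𝓕 s : MeasurableSpace Ω)) h_eq h_pi ?_ ?_ ?_ ?_ B hB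
    · simp
    · -- base case: B ∈ 𝓕 u
      rintro B ⟨u, hB⟩
      have hBm : MeasurableSet[m] B := 𝓕.le u _ hB
      set b : Ω → ℝ := B.indicator (fun _ => (1:ℝ)) with hb
      have hb_int : Integrable b ν := (integrable_const (1:ℝ)).indicator hBm
      have hbb : ∀ᵐ ω ∂ν, |b ω| ≤ 1 := Eventually.of_forall fun ω => by
        by_cases h : ω ∈ B <;> simp [hb, h]
      have hbsm : StronglyMeasurable[𝓕 u] b :=
        stronglyMeasurable_const.indicator hB
      have hcbb : ∀ᵐ ω ∂ν, |(ν[b|𝓕 t]) ω| ≤ (1:ℝ≥0) := ae_bdd_condExp_of_ae_bdd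
        (by simpa using hbb)
      calc ∫ ω in B, (ν[a|𝓕 t]) ω ∂ν
          = ∫ ω, (ν[a|𝓕 t]) ω * b ω ∂ν := setIntegral_eq_integral_mul_ind hBm _
        _ = ∫ ω, (ν[a|𝓕 t]) ω * (ν[b|𝓕 t]) ω ∂ν :=
            integral_mul_condexp_bdd' (𝓕.le t) stronglyMeasurable_condExp
              integrable_condExp (hb_int.aestronglyMeasurable) hbb
        _ = ∫ ω, (ν[b|𝓕 t]) ω * (ν[a|𝓕 t]) ω ∂ν := by
            simp_rw [mul_comm]
        _ = ∫ ω, (ν[b|𝓕 t]) ω * a ω ∂ν :=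
            (integral_mul_condexp_bdd (𝓕.le t) stronglyMeasurable_condExp
              (by simpa using hcbb) ha_int).symm
        _ = ∫ ω in A, (ν[b|𝓕 t]) ω ∂ν := (setIntegral_eq_integral_mul_ind hAm _).symm
        _ = ∫ ω in A, (ν[b|𝓖 t]) ω ∂ν := by
            refine integral_congr_ae (ae_restrict_of_ae ?_)
            exact (condexp_eq_of_H hH t u hbsm hb_int).symm
        _ = ∫ ω in A, b ω ∂ν := setIntegral_condExp (𝓖.le t) hb_int hA
        _ = ∫ ω, b ω * a ω ∂ν := setIntegral_eq_integral_mul_ind hAm _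
        _ = ∫ ω, a ω * b ω ∂ν := by simp_rw [mul_comm]
        _ = ∫ ω in B, a ω ∂ν := (setIntegral_eq_integral_mul_ind hBm _).symm
    · -- complement
      intro B hBmeas hBeq
      have hBm : MeasurableSet[m] B := hmtop _ hBmeas
      have h1 := integral_add_compl hBm (integrable_condExp (f := a) (m := 𝓕 t) (μ := ν))
      have h2 := integral_add_compl hBm ha_int
      have h3 : ∫ ω, (ν[a|𝓕 t]) ω ∂ν = ∫ ω, a ω ∂ν := integral_condExp (𝓕.le t)
      linarith
    · -- disjoint union
      intro f hdisj hmeas hCf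
      have hfm : ∀ i, MeasurableSet[m] (f i) := fun i => hmtop _ (hmeas i)
      rw [integral_iUnion hfm hdisj integrable_condExp.integrableOn,
        integral_iUnion hfm hdisj ha_int.integrableOn]
      exact tsum_congr hCf
  exact fun s hs _ => key s hs

/-- Key lemma: under (H) for `ν`, conditional expectations of `𝓕_∞`-measurable integrable
functions on `𝓖 t` and `𝓕 t` agree. -/
lemma condexp_eq_of_H_iSup {m : MeasurableSpace Ω} {ν : Measure Ω} [IsProbabilityMeasure ν]
    {𝓕 𝓖 : Filtration ℝ≥0 m} (hle : ∀ t : ℝ≥0, (𝓕 t : MeasurableSpace Ω) ≤ 𝓖 t)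
    (hH : ∀ M : ℝ≥0 → Ω → ℝ, Martingale M 𝓕 ν → Martingale M 𝓖 ν)
    (t : ℝ≥0) {X : Ω → ℝ}
    (hX : StronglyMeasurable[⨆ s : ℝ≥0, (𝓕 s : MeasurableSpace Ω)] X)
    (hXi : Integrable X ν) :
    ν[X|𝓖 t] =ᵐ[ν] ν[X|𝓕 t] := by
  have hmtop : (⨆ s : ℝ≥0, (𝓕 s : MeasurableSpace Ω)) ≤ m := iSup_le fun s => 𝓕.le s
  have hXm : AEStronglyMeasurable X ν := (hX.mono hmtop).aestronglyMeasurable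
  refine (ae_eq_condExp_of_forall_setIntegral_eq (𝓖.le t) hXi
    (fun s _ _ => integrable_condExp.integrableOn) ?_ ?_).symm
  swap
  · exact (stronglyMeasurable_condExp.mono (hle t)).aestronglyMeasurable
  intro A hA _
  have hAm : MeasurableSet[m] A := 𝓖.le t _ hA
  set a : Ω → ℝ := A.indicator (fun _ => (1:ℝ)) with ha
  have ha_int : Integrable a ν := (integrable_const (1:ℝ)).indicator hAm
  have hab : ∀ᵐ ω ∂ν, |a ω| ≤ 1 := Eventually.of_forall fun ω => by
    by_cases h : ω ∈ A <;> simp [ha, h]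
  have hcab : ∀ᵐ ω ∂ν, |(ν[a|𝓕 t]) ω| ≤ (1:ℝ≥0) :=
    ae_bdd_condExp_of_ae_bdd (by simpa using hab)
  have hKM := condexp_indicator_iSup_eq_of_H hH t hA
  calc ∫ ω in A, (ν[X|𝓕 t]) ω ∂ν
      = ∫ ω, (ν[X|𝓕 t]) ω * a ω ∂ν := setIntegral_eq_integral_mul_ind hAm _
    _ = ∫ ω, (ν[X|𝓕 t]) ω * (ν[a|𝓕 t]) ω ∂ν :=
        integral_mul_condexp_bdd' (𝓕.le t) stronglyMeasurable_condExp
          integrable_condExp ha_int.aestronglyMeasurable hab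
    _ = ∫ ω, (ν[a|𝓕 t]) ω * (ν[X|𝓕 t]) ω ∂ν := by simp_rw [mul_comm]
    _ = ∫ ω, (ν[a|𝓕 t]) ω * X ω ∂ν :=
        (integral_mul_condexp_bdd (𝓕.le t) stronglyMeasurable_condExp
          (by simpa using hcab) hXi).symm
    _ = ∫ ω, X ω * (ν[a|𝓕 t]) ω ∂ν := by simp_rw [mul_comm]
    _ = ∫ ω, X ω * (ν[a|⨆ s : ℝ≥0, (𝓕 s : MeasurableSpace Ω)]) ω ∂ν := by
        refine integral_congr_ae ?_
        filter_upwards [hKM] with ω hω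
        rw [hω]
    _ = ∫ ω, X ω * a ω ∂ν :=
        (integral_mul_condexp_bdd' hmtop hX hXi ha_int.aestronglyMeasurable hab).symm
    _ = ∫ ω in A, X ω ∂ν := (setIntegral_eq_integral_mul_ind hAm _).symm

end AuxLemmas

/-- **Criterion for (H) under an equivalent measure.** Suppose (H) holds under `P` and
`Q ∼ P` with density `Y = dQ/dP`. Set `R t = E_P[Y | 𝓕 t]` and `R' t = E_P[Y | 𝓖 t]`.
Then (H) holds under `Q` iff for every `t` and every nonnegative `𝓕_∞`-measurable `X`,
`E_P[XY | 𝓖 t] / R' t = E_P[XY | 𝓕 t] / R t` a.s. -/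
theorem H_equivalent_measure_criterion {μ ν : Measure Ω}
    [IsProbabilityMeasure μ] [IsProbabilityMeasure ν]
    (𝓕 𝓖 : Filtration ℝ≥0 m)
    (h𝓕 : UsualConditions 𝓕 μ) (h𝓖 : UsualConditions 𝓖 μ)
    (hle : ∀ t : ℝ≥0, (𝓕 t : MeasurableSpace Ω) ≤ 𝓖 t)
    (hH : ∀ M : ℝ≥0 → Ω → ℝ, Martingale M 𝓕 μ → Martingale M 𝓖 μ)
    (hequiv : μ ≪ ν ∧ ν ≪ μ)
    (Y : Ω → ℝ) (hYmeas : Measurable Y) (hYpos : ∀ᵐ ω ∂μ, 0 < Y ω)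
    (hYdens : ν = μ.withDensity (fun ω => ENNReal.ofReal (Y ω))) :
    (∀ M : ℝ≥0 → Ω → ℝ, Martingale M 𝓕 ν → Martingale M 𝓖 ν) ↔
      (∀ (t : ℝ≥0) (X : Ω → ℝ), 0 ≤ X →
        Measurable[⨆ s : ℝ≥0, (𝓕 s : MeasurableSpace Ω)] X →
        (fun ω => (μ[fun ω' => X ω' * Y ω' | 𝓖 t]) ω / (μ[Y | 𝓖 t]) ω) =ᵐ[μ]
        (fun ω => (μ[fun ω' => X ω' * Y ω' | 𝓕 t]) ω / (μ[Y | 𝓕 t]) ω)) := by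
  have hmtop : (⨆ s : ℝ≥0, (𝓕 s : MeasurableSpace Ω)) ≤ m := iSup_le fun s => 𝓕.le s
  constructor
  · -- (H) under ν implies the ratio condition
    intro hHν t X hXnn hXmeas
    by_cases hint : Integrable (fun ω => X ω * Y ω) μ
    · have hXν : Integrable X ν :=
        (integrable_withDensity'_iff hYmeas hYpos hYdens X).mpr hint
      have hb1 := bayes_div (𝓖.le t) hYmeas hYpos hYdens hXν
      have hb2 := bayes_div (𝓕.le t) hYmeas hYpos hYdens hXν
      have hKL : ν[X|𝓖 t] =ᵐ[ν] ν[X|𝓕 t] :=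
        condexp_eq_of_H_iSup hle hHν t hXmeas.stronglyMeasurable hXν
      have hKLμ : ν[X|𝓖 t] =ᵐ[μ] ν[X|𝓕 t] := hKL.filter_mono hequiv.1.ae_le
      exact hb1.trans (hKLμ.trans hb2.symm)
    · rw [condExp_of_not_integrable hint, condExp_of_not_integrable hint]
      simp
  · -- the ratio condition implies (H) under ν
    intro hcond M hM
    refine ⟨fun i => (hM.stronglyAdapted i).mono (hle i), fun s t' hst => ?_⟩
    have hint : Integrable (M t') ν := hM.integrable t'
    set P : Ω → ℝ := fun ω => max (M t' ω) 0 with hP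
    set N : Ω → ℝ := fun ω => max (-(M t' ω)) 0 with hN
    have hMm : Measurable[⨆ u : ℝ≥0, (𝓕 u : MeasurableSpace Ω)] (M t') :=
      ((hM.stronglyAdapted t').measurable).mono (le_iSup (fun u : ℝ≥0 => (𝓕 u : MeasurableSpace Ω)) t')
        le_rfl
    have hPm : Measurable[⨆ u : ℝ≥0, (𝓕 u : MeasurableSpace Ω)] P :=
      hMm.max measurable_const
    have hNm : Measurable[⨆ u : ℝ≥0, (𝓕 u : MeasurableSpace Ω)] N :=
      hMm.neg.max measurable_const
    have hPν : Integrable P ν := hint.pos_part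
    have hNν : Integrable N ν := hint.neg_part
    have key : ∀ (Z : Ω → ℝ), 0 ≤ Z → Measurable[⨆ u : ℝ≥0, (𝓕 u : MeasurableSpace Ω)] Z →
        Integrable Z ν → ν[Z|𝓖 s] =ᵐ[ν] ν[Z|𝓕 s] := by
      intro Z hZnn hZm hZν
      have hb1 := bayes_div (𝓖.le s) hYmeas hYpos hYdens hZν
      have hb2 := bayes_div (𝓕.le s) hYmeas hYpos hYdens hZν
      have hμ : ν[Z|𝓖 s] =ᵐ[μ] ν[Z|𝓕 s] :=
        (hb1.symm.trans ((hcond s Z hZnn hZm).trans hb2))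
      exact hμ.filter_mono hequiv.2.ae_le
    have hPkey := key P (fun ω => le_max_right _ _) hPm hPν
    have hNkey := key N (fun ω => le_max_right _ _) hNm hNν
    have hsub : M t' = fun ω => P ω - N ω := by
      funext ω
      simp only [hP, hN]
      exact (max_zero_sub_max_neg_zero_eq_self (M t' ω)).symm
    have hG : ν[M t'|𝓖 s] =ᵐ[ν] fun ω => (ν[P|𝓖 s]) ω - (ν[N|𝓖 s]) ω := by
      rw [hsub]
      have := condExp_sub (μ := ν) (m := 𝓖 s) hPν hNν
      exact this
    have hF : ν[M t'|𝓕 s] =ᵐ[ν] fun ω => (ν[P|𝓕 s]) ω - (ν[N|𝓕 s]) ω := by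
      rw [hsub]
      have := condExp_sub (μ := ν) (m := 𝓕 s) hPν hNν
      exact this
    have hMart : ν[M t'|𝓕 s] =ᵐ[ν] M s := hM.2 s t' hst
    calc ν[M t'|𝓖 s]
        =ᵐ[ν] fun ω => (ν[P|𝓖 s]) ω - (ν[N|𝓖 s]) ω := hG
      _ =ᵐ[ν] fun ω => (ν[P|𝓕 s]) ω - (ν[N|𝓕 s]) ω := by
          filter_upwards [hPkey, hNkey] with ω h1 h2
          rw [h1, h2]
      _ =ᵐ[ν] M s := hF.symm.trans hMart


end Enlargement
end
end

section
/- Preservation of (H) for F_∞-measurable densities: Let (Ω,F,P) be a probability space with filtrations (F_t) ⊆ (G_t) satisfying the usual assumptions, and suppose every (F_t,P)-martingale is a (G_t,P)-martingale. Let Q ~ P be such that the density dQ/dP is F_∞-measurable. Then E_P[dQ/dP | G_t] = E_P[dQ/dP | F_t] a.s. for every t, and the (H) hypothesis holds under Q: every (F_t,Q)-martingale is a (G_t,Q)-martingale. -/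
open MeasureTheory Filter Set ProbabilityTheory
open scoped NNReal ENNReal

noncomputable section

namespace Enlargement

variable {Ω : Type*} {m : MeasurableSpace Ω}

/-- The natural-indexed restriction of a `ℝ≥0`-indexed filtration. -/
def natFilt (𝓕 : Filtration ℝ≥0 m) : Filtration ℕ m where
  seq n := 𝓕 n
  mono' i j hij := 𝓕.mono (by exact_mod_cast hij)
  le' n := 𝓕.le n

lemma natFilt_iSup (𝓕 : Filtration ℝ≥0 m) :
    (⨆ n : ℕ, (natFilt 𝓕 n : MeasurableSpace Ω)) = ⨆ s : ℝ≥0, (𝓕 s : MeasurableSpace Ω) := by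
  apply le_antisymm
  · exact iSup_le fun n => le_iSup (fun s : ℝ≥0 => (𝓕 s : MeasurableSpace Ω)) (n : ℝ≥0)
  · exact iSup_le fun s => le_iSup_of_le ⌈s⌉₊ (𝓕.mono (Nat.le_ceil s))

/-- Key lemma: if (H) holds, then for `𝓕_∞`-measurable integrable `f`,
conditioning on `𝓖 t` equals conditioning on `𝓕 t`. -/
lemma condexp_G_eq_condexp_F {μ : Measure Ω} [IsFiniteMeasure μ]
    (𝓕 𝓖 : Filtration ℝ≥0 m)
    (hH : ∀ M : ℝ≥0 → Ω → ℝ, Martingale M 𝓕 μ → Martingale M 𝓖 μ)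
    {f : Ω → ℝ} (hf : Integrable f μ)
    (hfm : StronglyMeasurable[⨆ s : ℝ≥0, (𝓕 s : MeasurableSpace Ω)] f) (t : ℝ≥0) :
    μ[f|𝓖 t] =ᵐ[μ] μ[f|𝓕 t] := by
  have hfm' : StronglyMeasurable[⨆ n : ℕ, (natFilt 𝓕 n : MeasurableSpace Ω)] f := by
    rw [natFilt_iSup]; exact hfm
  have hconv : Tendsto (fun n : ℕ => eLpNorm (μ[f| natFilt 𝓕 n] - f) 1 μ) atTop (nhds 0) :=
    hf.tendsto_eLpNorm_condExp hfm'
  have key : ∀ n : ℕ, t ≤ (n : ℝ≥0) →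
      μ[(μ[f|𝓕 (n : ℝ≥0)])|𝓖 t] =ᵐ[μ] μ[f|𝓕 t] := fun n hn =>
    (hH _ (martingale_condExp f 𝓕 μ)).2 t n hn
  have hbound : ∀ n : ℕ, t ≤ (n : ℝ≥0) →
      eLpNorm (μ[f|𝓖 t] - μ[f|𝓕 t]) 1 μ ≤ eLpNorm (μ[f| natFilt 𝓕 n] - f) 1 μ := by
    intro n hn
    have h2 : μ[f - μ[f|𝓕 (n : ℝ≥0)] | 𝓖 t] =ᵐ[μ]
        μ[f|𝓖 t] - μ[(μ[f|𝓕 (n : ℝ≥0)])|𝓖 t] := condExp_sub hf integrable_condExp _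
    have h1 : μ[f|𝓖 t] - μ[f|𝓕 t] =ᵐ[μ] μ[f - μ[f|𝓕 (n : ℝ≥0)] | 𝓖 t] := by
      filter_upwards [h2, key n hn] with ω hω1 hω2
      simp only [Pi.sub_apply] at *
      rw [hω1, hω2]
    calc eLpNorm (μ[f|𝓖 t] - μ[f|𝓕 t]) 1 μ
        = eLpNorm (μ[f - μ[f|𝓕 (n : ℝ≥0)] | 𝓖 t]) 1 μ := eLpNorm_congr_ae h1
      _ ≤ eLpNorm (f - μ[f|𝓕 (n : ℝ≥0)]) 1 μ := eLpNorm_one_condExp_le_eLpNorm _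
      _ = eLpNorm (μ[f| natFilt 𝓕 n] - f) 1 μ := by
          rw [show f - μ[f|𝓕 (n : ℝ≥0)] = -(μ[f|𝓕 (n : ℝ≥0)] - f) by ext ω; simp,
            eLpNorm_neg]
          rfl
  have hzero : eLpNorm (μ[f|𝓖 t] - μ[f|𝓕 t]) 1 μ = 0 := by
    refine le_antisymm (ge_of_tendsto hconv ?_) (zero_le)
    filter_upwards [eventually_ge_atTop ⌈t⌉₊] with n hn
    exact hbound n (le_trans (Nat.le_ceil t) (by exact_mod_cast hn))
  have hae : μ[f|𝓖 t] - μ[f|𝓕 t] =ᵐ[μ] 0 := by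
    rw [← eLpNorm_eq_zero_iff
      ((stronglyMeasurable_condExp.mono (𝓖.le t)).aestronglyMeasurable.sub
        (stronglyMeasurable_condExp.mono (𝓕.le t)).aestronglyMeasurable) one_ne_zero]
    exact hzero
  filter_upwards [hae] with ω hω
  simpa [Pi.sub_apply, sub_eq_zero] using hω


/-- **Preservation of (H) for `𝓕_∞`-measurable densities.** Suppose (H) holds under `P`
and `Q ∼ P` with `𝓕_∞`-measurable density `Y = dQ/dP`. Then `E_P[Y | 𝓖 t] = E_P[Y | 𝓕 t]`
a.s. for every `t`, and (H) holds under `Q`. -/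
theorem H_preserved_Finfty_density {μ ν : Measure Ω}
    [IsProbabilityMeasure μ] [IsProbabilityMeasure ν]
    (𝓕 𝓖 : Filtration ℝ≥0 m)
    (h𝓕 : UsualConditions 𝓕 μ) (h𝓖 : UsualConditions 𝓖 μ)
    (hle : ∀ t : ℝ≥0, (𝓕 t : MeasurableSpace Ω) ≤ 𝓖 t)
    (hH : ∀ M : ℝ≥0 → Ω → ℝ, Martingale M 𝓕 μ → Martingale M 𝓖 μ)
    (hequiv : μ ≪ ν ∧ ν ≪ μ)
    (Y : Ω → ℝ) (hYpos : ∀ᵐ ω ∂μ, 0 < Y ω)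
    (hYmeas : Measurable[⨆ s : ℝ≥0, (𝓕 s : MeasurableSpace Ω)] Y)
    (hYdens : ν = μ.withDensity (fun ω => ENNReal.ofReal (Y ω))) :
    (∀ t : ℝ≥0, μ[Y | 𝓖 t] =ᵐ[μ] μ[Y | 𝓕 t]) ∧
    (∀ M : ℝ≥0 → Ω → ℝ, Martingale M 𝓕 ν → Martingale M 𝓖 ν) := by
  have hYm : Measurable Y := hYmeas.mono (iSup_le 𝓕.le) le_rfl
  have hYsm : StronglyMeasurable[⨆ s : ℝ≥0, (𝓕 s : MeasurableSpace Ω)] Y :=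
    hYmeas.stronglyMeasurable
  have hconvInt : ∀ g : Ω → ℝ, Integrable g ν → Integrable (fun ω => Y ω * g ω) μ := by
    intro g hg
    rw [hYdens, integrable_withDensity_iff hYm.ennreal_ofReal
      (Filter.Eventually.of_forall fun _ => ENNReal.ofReal_lt_top)] at hg
    refine hg.congr ?_
    filter_upwards [hYpos] with ω h
    rw [ENNReal.toReal_ofReal h.le, mul_comm]
  have hsetInt : ∀ (g : Ω → ℝ) (A : Set Ω), MeasurableSet A →
      ∫ x in A, g x ∂ν = ∫ x in A, Y x * g x ∂μ := by
    intro g A hA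
    have : ν = μ.withDensity (fun ω => ((Y ω).toNNReal : ℝ≥0∞)) := hYdens
    rw [this, setIntegral_withDensity_eq_setIntegral_smul hYm.real_toNNReal g hA]
    refine integral_congr_ae (ae_restrict_of_ae ?_)
    filter_upwards [hYpos] with ω h
    simp [NNReal.smul_def, Real.coe_toNNReal _ h.le]
  have hYint : Integrable Y μ := by
    simpa using hconvInt (fun _ => 1) (integrable_const 1)
  have hFle : ∀ u : ℝ≥0, (𝓕 u : MeasurableSpace Ω) ≤ ⨆ v : ℝ≥0, (𝓕 v : MeasurableSpace Ω) :=
    fun u => le_iSup (fun v : ℝ≥0 => (𝓕 v : MeasurableSpace Ω)) u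
  refine ⟨fun t => condexp_G_eq_condexp_F 𝓕 𝓖 hH hYint hYsm t, ?_⟩
  intro M hM
  refine ⟨fun t => (hM.stronglyAdapted t).mono (hle t), ?_⟩
  intro s t hst
  have hMt : Integrable (M t) ν := hM.integrable t
  have hMs : Integrable (M s) ν := hM.integrable s
  have hYMt : Integrable (fun ω => Y ω * M t ω) μ := hconvInt _ hMt
  have hYMs : Integrable (fun ω => Y ω * M s ω) μ := hconvInt _ hMs
  have hYMtsm : StronglyMeasurable[⨆ v : ℝ≥0, (𝓕 v : MeasurableSpace Ω)]
      (fun ω => Y ω * M t ω) := hYsm.mul ((hM.stronglyAdapted t).mono (hFle t))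
  have hYMssm : StronglyMeasurable[⨆ v : ℝ≥0, (𝓕 v : MeasurableSpace Ω)]
      (fun ω => Y ω * M s ω) := hYsm.mul ((hM.stronglyAdapted s).mono (hFle s))
  have e1 : μ[fun ω => Y ω * M t ω | 𝓖 s] =ᵐ[μ] μ[fun ω => Y ω * M t ω | 𝓕 s] :=
    condexp_G_eq_condexp_F 𝓕 𝓖 hH hYMt hYMtsm s
  have e2 : μ[fun ω => Y ω * M s ω | 𝓖 s] =ᵐ[μ] μ[fun ω => Y ω * M s ω | 𝓕 s] :=
    condexp_G_eq_condexp_F 𝓕 𝓖 hH hYMs hYMssm s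
  have e3 : μ[fun ω => Y ω * M s ω | 𝓕 s] =ᵐ[μ] μ[fun ω => Y ω * M t ω | 𝓕 s] := by
    refine ae_eq_condExp_of_forall_setIntegral_eq (𝓕.le s) hYMt
      (fun B _ _ => integrable_condExp.integrableOn) (fun B hB _ => ?_)
      stronglyMeasurable_condExp.aestronglyMeasurable
    rw [setIntegral_condExp (𝓕.le s) hYMs hB,
      ← hsetInt (M s) B ((𝓕.le s) _ hB), ← hsetInt (M t) B ((𝓕.le s) _ hB)]
    calc ∫ x in B, M s x ∂ν
        = ∫ x in B, (ν[M t|𝓕 s]) x ∂ν :=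
          integral_congr_ae (ae_restrict_of_ae (hM.2 s t hst).symm)
      _ = ∫ x in B, M t x ∂ν := setIntegral_condExp (𝓕.le s) hMt hB
  refine (ae_eq_condExp_of_forall_setIntegral_eq (𝓖.le s) hMt
    (fun A _ _ => hMs.integrableOn) (fun A hA _ => ?_)
    (((hM.stronglyAdapted s).mono (hle s)).aestronglyMeasurable)).symm
  have hAm : MeasurableSet A := (𝓖.le s) _ hA
  rw [hsetInt (M s) A hAm, hsetInt (M t) A hAm]
  calc ∫ x in A, Y x * M s x ∂μ
      = ∫ x in A, (μ[fun ω => Y ω * M s ω|𝓖 s]) x ∂μ :=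
        (setIntegral_condExp (𝓖.le s) hYMs hA).symm
    _ = ∫ x in A, (μ[fun ω => Y ω * M s ω|𝓕 s]) x ∂μ :=
        integral_congr_ae (ae_restrict_of_ae e2)
    _ = ∫ x in A, (μ[fun ω => Y ω * M t ω|𝓕 s]) x ∂μ :=
        integral_congr_ae (ae_restrict_of_ae e3)
    _ = ∫ x in A, (μ[fun ω => Y ω * M t ω|𝓖 s]) x ∂μ :=
        (integral_congr_ae (ae_restrict_of_ae e1)).symm
    _ = ∫ x in A, Y x * M t x ∂μ := setIntegral_condExp (𝓖.le s) hYMt hA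

end Enlargement
end
end
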